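/- arXiv:0809.4387 — 11 statements merged into one kernel-verified Lean document; each statement's English description precedes it below -/
import Mathlib

section
/- Let (p_j)_{j≥1} be positive reals summing to 1 and define Φ_r(t) = ∑_{j≥1} e^{-t p_j} (t p_j)^r / r! for t > 0, r ≥ 1. Then for all integers 1 ≤ s < r and all t > 0: Φ_s(t/2) ≥ Φ_r(t) · (e/(r-s))^{r-s} · r! / (s! 2^r). -/
/-- Expected number of boxes containing exactly `r` balls at time `t`
in the Poissonized occupancy scheme with frequencies `p`. -/
noncomputable def Phi (p : ℕ → ℝ) (r : ℕ) (t : ℝ) : ℝ :=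
  ∑' j : ℕ, Real.exp (-(t * p j)) * (t * p j) ^ r / r.factorial

private lemma summ_aux (p : ℕ → ℝ) (hp : ∀ j, 0 < p j) (hsum : Summable p)
    (m : ℕ) (hm : 1 ≤ m) (c : ℝ) (hc : 0 < c) :
    Summable fun j => Real.exp (-(c * p j)) * (c * p j) ^ m / m.factorial := by
  refine Summable.of_nonneg_of_le
    (fun j => div_nonneg (mul_nonneg (Real.exp_pos _).le
      (pow_nonneg (mul_pos hc (hp j)).le _)) (Nat.cast_nonneg _))
    (fun j => ?_) (hsum.mul_left c)
  set y := c * p j with hy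
  have hy0 : 0 < y := mul_pos hc (hp j)
  have h1 : y ^ (m - 1) / (m-1).factorial ≤ Real.exp y :=
    Real.pow_div_factorial_le_exp y hy0.le _
  have hfac : ((m-1).factorial : ℝ) ≤ (m.factorial : ℝ) := by
    exact_mod_cast Nat.factorial_le (Nat.sub_le m 1)
  have hym : y ^ m = y * y ^ (m - 1) := by
    conv_lhs => rw [show m = 1 + (m - 1) by omega]
    rw [pow_add, pow_one]
  rw [hym]
  have hfac0 : (0:ℝ) < (m-1).factorial := by positivity
  have h2 : y ^ (m-1) ≤ Real.exp y * (m.factorial : ℝ) := by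
    have := (div_le_iff₀ hfac0).mp h1
    nlinarith [Real.exp_pos y]
  rw [div_le_iff₀ (by positivity : (0:ℝ) < (m.factorial:ℝ))]
  have : Real.exp (-y) * (y * y ^ (m-1)) ≤ Real.exp (-y) * (y * (Real.exp y * m.factorial)) := by
    have h3 : y * y^(m-1) ≤ y * (Real.exp y * m.factorial) := by
      exact mul_le_mul_of_nonneg_left h2 hy0.le
    exact mul_le_mul_of_nonneg_left h3 (Real.exp_pos _).le
  calc Real.exp (-y) * (y * y ^ (m-1)) ≤ Real.exp (-y) * (y * (Real.exp y * m.factorial)) := this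
    _ = y * m.factorial := by
        rw [show Real.exp (-y) * (y * (Real.exp y * m.factorial))
          = (Real.exp (-y) * Real.exp y) * (y * m.factorial) by ring,
          ← Real.exp_add]
        simp

private lemma key_pt (x : ℝ) (hx : 0 < x) (s k : ℕ) (hk : 1 ≤ k) :
    Real.exp (-x) * x ^ (s + k) / (s + k).factorial *
      ((Real.exp 1 / (k:ℝ)) ^ k * (((s+k).factorial : ℝ) / (s.factorial * 2 ^ (s+k))))
      ≤ Real.exp (-(x / 2)) * (x / 2) ^ s / s.factorial := by
  have hk0 : (0:ℝ) < k := by exact_mod_cast hk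
  have hkne : (k:ℝ) ≠ 0 := hk0.ne'
  set u : ℝ := x / (2 * k) with hu
  have hu0 : 0 < u := by positivity
  have h1 : Real.exp 1 * u ≤ Real.exp u := by
    have := Real.add_one_le_exp (u - 1)
    have h2 : u ≤ Real.exp (u - 1) := by linarith
    calc Real.exp 1 * u ≤ Real.exp 1 * Real.exp (u - 1) :=
          mul_le_mul_of_nonneg_left h2 (Real.exp_pos 1).le
      _ = Real.exp u := by rw [← Real.exp_add]; ring_nf
  have hA : (Real.exp 1 / (k:ℝ)) ^ k * x ^ k ≤ Real.exp (x / 2) * 2 ^ k := by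
    have he : (Real.exp 1 / (k:ℝ)) ^ k * x ^ k = (Real.exp 1 * u) ^ k * 2 ^ k := by
      rw [← mul_pow, ← mul_pow]
      congr 1
      field_simp [hkne]
      rw [hu]
      field_simp
    rw [he]
    have h3 : (Real.exp 1 * u) ^ k ≤ (Real.exp u) ^ k := by
      apply pow_le_pow_left₀ (by positivity) h1
    have h4 : (Real.exp u) ^ k = Real.exp (x / 2) := by
      rw [← Real.exp_nat_mul]
      congr 1
      field_simp [hkne]
      rw [hu]
      field_simp
    have := h3.trans_eq h4
    exact mul_le_mul_of_nonneg_right this (by positivity)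
  -- main algebra
  have hfacne : ((s+k).factorial : ℝ) ≠ 0 := by positivity
  have hsfac : (0:ℝ) < (s.factorial : ℝ) := by positivity
  have heq1 : Real.exp (-x) * x ^ (s + k) / (s + k).factorial *
      ((Real.exp 1 / (k:ℝ)) ^ k * (((s+k).factorial : ℝ) / (s.factorial * 2 ^ (s+k))))
      = Real.exp (-x) * x ^ s * ((Real.exp 1 / (k:ℝ)) ^ k * x ^ k) /
        (s.factorial * 2 ^ s * 2 ^ k) := by
    rw [pow_add]
    field_simp
    ring
  have heq2 : Real.exp (-x) * x ^ s * (Real.exp (x/2) * 2 ^ k) /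
        ((s.factorial : ℝ) * 2 ^ s * 2 ^ k)
      = Real.exp (-(x / 2)) * (x / 2) ^ s / s.factorial := by
    rw [div_pow]
    have hee : Real.exp (-x) * Real.exp (x/2) - Real.exp (-x/2) = 0 := by
      rw [← Real.exp_add]; ring_nf
    field_simp
    rw [neg_div] at hee
    linear_combination hee
  rw [heq1, ← heq2]
  apply div_le_div_of_nonneg_right ?_ (by positivity)
  · exact mul_le_mul_of_nonneg_left hA (by positivity)

theorem stmt_3 (p : ℕ → ℝ) (hp : ∀ j, 0 < p j) (hsum : ∑' j : ℕ, p j = 1)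
    (r s : ℕ) (hs : 1 ≤ s) (hsr : s < r) (t : ℝ) (ht : 0 < t) :
    Phi p s (t / 2) ≥
      Phi p r t * (Real.exp 1 / ((r : ℝ) - s)) ^ (r - s) *
        ((r.factorial : ℝ) / (s.factorial * 2 ^ r)) := by
  have hpsum : Summable p := by
    by_contra h
    rw [tsum_eq_zero_of_not_summable h] at hsum
    norm_num at hsum
  set k := r - s with hkdef
  have hrk : r = s + k := by omega
  have hk1 : 1 ≤ k := by omega
  have hcast : ((r : ℝ) - s) = (k : ℝ) := by
    rw [hkdef, Nat.cast_sub hsr.le]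
  set C : ℝ := (Real.exp 1 / (k:ℝ)) ^ k * ((r.factorial : ℝ) / (s.factorial * 2 ^ r))
    with hC
  have hsumr := summ_aux p hp hpsum r (by omega) t ht
  have hsums := summ_aux p hp hpsum s hs (t/2) (half_pos ht)
  have hmain : Phi p r t * C ≤ Phi p s (t/2) := by
    rw [Phi, Phi, ← tsum_mul_right]
    apply Summable.tsum_le_tsum ?_ (hsumr.mul_right C) ?_
    · intro j
      have hx : 0 < t * p j := mul_pos ht (hp j)
      have := key_pt (t * p j) hx s k hk1
      rw [← hrk] at this
      have harg : t / 2 * p j = (t * p j) / 2 := by ring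
      rw [hC, harg]
      rw [hrk] at this ⊢
      exact this
    · exact hsums
  calc Phi p r t * (Real.exp 1 / ((r : ℝ) - s)) ^ (r - s) *
        ((r.factorial : ℝ) / (s.factorial * 2 ^ r))
      = Phi p r t * C := by rw [hC, hcast]; ring
    _ ≤ Phi p s (t/2) := hmain
end

section
/- With Φ_r(t) = ∑_{j≥1} e^{-t p_j}(t p_j)^r/r! and V_r(t) = ∑_{j≥1} e^{-t p_j}(t p_j)^r/r! · (1 - e^{-t p_j}(t p_j)^r/r!), there exists a constant k_r = 1 - e^{-r} r^r/r! > 0 such that Φ_r(t) > V_r(t) > k_r Φ_r(t) for all t > 0. Consequently V_r(t) → ∞ as t → ∞ if and only if Φ_r(t) → ∞. -/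
open Real Filter

lemma pois_le (r : ℕ) {x : ℝ} (hx : 0 < x) (hr : 1 ≤ r) :
    Real.exp (-x) * x ^ r ≤ Real.exp (-(r:ℝ)) * (r:ℝ) ^ r := by
  have hr0 : (0:ℝ) < r := by exact_mod_cast hr
  have h := Real.log_le_sub_one_of_pos (show (0:ℝ) < x / r by positivity)
  rw [Real.log_div hx.ne' hr0.ne'] at h
  have key : (r:ℝ) * Real.log x - x ≤ (r:ℝ) * Real.log r - r := by
    have := mul_le_mul_of_nonneg_left h hr0.le
    have hxr : (r:ℝ) * (x / r - 1) = x - r := by field_simp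
    nlinarith
  calc Real.exp (-x) * x ^ r = Real.exp ((r:ℝ) * Real.log x - x) := by
        rw [Real.exp_sub, Real.exp_nat_mul, Real.exp_log hx, Real.exp_neg]
        ring
    _ ≤ Real.exp ((r:ℝ) * Real.log r - r) := Real.exp_le_exp.mpr key
    _ = Real.exp (-(r:ℝ)) * (r:ℝ) ^ r := by
        rw [Real.exp_sub, Real.exp_nat_mul, Real.exp_log hr0, Real.exp_neg]
        ring

lemma pois_lt (r : ℕ) {x : ℝ} (hx : 0 < x) (hr : 1 ≤ r) (hne : x ≠ (r:ℝ)) :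
    Real.exp (-x) * x ^ r < Real.exp (-(r:ℝ)) * (r:ℝ) ^ r := by
  have hr0 : (0:ℝ) < r := by exact_mod_cast hr
  have hne1 : x / r ≠ 1 := by
    intro h; apply hne; field_simp at h; linarith
  have h := Real.log_lt_sub_one_of_pos (show (0:ℝ) < x / r by positivity) hne1
  rw [Real.log_div hx.ne' hr0.ne'] at h
  have key : (r:ℝ) * Real.log x - x < (r:ℝ) * Real.log r - r := by
    have := mul_lt_mul_of_pos_left h hr0
    have hxr : (r:ℝ) * (x / r - 1) = x - r := by field_simp
    nlinarith
  calc Real.exp (-x) * x ^ r = Real.exp ((r:ℝ) * Real.log x - x) := by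
        rw [Real.exp_sub, Real.exp_nat_mul, Real.exp_log hx, Real.exp_neg]
        ring
    _ < Real.exp ((r:ℝ) * Real.log r - r) := Real.exp_lt_exp.mpr key
    _ = Real.exp (-(r:ℝ)) * (r:ℝ) ^ r := by
        rw [Real.exp_sub, Real.exp_nat_mul, Real.exp_log hr0, Real.exp_neg]
        ring

lemma M_lt_one (r : ℕ) (hr : 1 ≤ r) :
    Real.exp (-(r:ℝ)) * (r:ℝ) ^ r / r.factorial < 1 := by
  have hfac : (0:ℝ) < r.factorial := by exact_mod_cast r.factorial_pos
  have hr0 : (0:ℝ) ≤ r := by positivity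
  have h := Real.sum_le_exp_of_nonneg hr0 (r+1)
  have hsub : ({0, r} : Finset ℕ) ⊆ Finset.range (r+1) := by
    intro i hi
    simp only [Finset.mem_insert, Finset.mem_singleton] at hi
    simp only [Finset.mem_range]; omega
  have h2 : ∑ i ∈ ({0, r} : Finset ℕ), (r:ℝ) ^ i / i.factorial ≤
      ∑ i ∈ Finset.range (r+1), (r:ℝ) ^ i / i.factorial := by
    apply Finset.sum_le_sum_of_subset_of_nonneg hsub
    intro i _ _; positivity
  rw [Finset.sum_pair (by omega : 0 ≠ r)] at h2
  norm_num at h2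
  have h3 : 1 + (r:ℝ) ^ r / r.factorial ≤ Real.exp r := le_trans h2 h
  rw [div_lt_one hfac, Real.exp_neg, inv_mul_lt_iff₀ (Real.exp_pos _)]
  have h4 := mul_le_mul_of_nonneg_right h3 hfac.le
  rw [add_mul, div_mul_cancel₀ _ hfac.ne', one_mul] at h4
  linarith



/-- Variance of the number of boxes with exactly `r` balls at time `t`. -/
noncomputable def Var (p : ℕ → ℝ) (r : ℕ) (t : ℝ) : ℝ :=
  ∑' j : ℕ, Real.exp (-(t * p j)) * (t * p j) ^ r / r.factorial *
    (1 - Real.exp (-(t * p j)) * (t * p j) ^ r / r.factorial)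

theorem stmt_4 (p : ℕ → ℝ) (hp : ∀ j, 0 < p j) (hsum : ∑' j : ℕ, p j = 1)
    (r : ℕ) (hr : 1 ≤ r) :
    (0 < 1 - Real.exp (-(r : ℝ)) * (r : ℝ) ^ r / r.factorial) ∧
    (∀ t : ℝ, 0 < t →
      Var p r t < Phi p r t ∧
      (1 - Real.exp (-(r : ℝ)) * (r : ℝ) ^ r / r.factorial) * Phi p r t < Var p r t) ∧
    (Filter.Tendsto (fun t => Var p r t) Filter.atTop Filter.atTop ↔
      Filter.Tendsto (fun t => Phi p r t) Filter.atTop Filter.atTop) := by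
  set M : ℝ := Real.exp (-(r : ℝ)) * (r : ℝ) ^ r / r.factorial with hM
  set k : ℝ := 1 - M with hk
  have hfac : (0:ℝ) < r.factorial := by exact_mod_cast r.factorial_pos
  have hk0 : 0 < k := by
    have := M_lt_one r hr
    simp only [hk, hM]; linarith [M_lt_one r hr]
  have hps : Summable p := by
    by_contra h
    rw [tsum_eq_zero_of_not_summable h] at hsum
    norm_num at hsum
  have hple : ∀ j, p j ≤ 1 := by
    intro j
    have := Summable.le_tsum hps j (fun i _ => (hp i).le)
    rwa [hsum] at this
  -- the generic term
  have main : ∀ t : ℝ, 0 < t →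
      Var p r t < Phi p r t ∧ k * Phi p r t < Var p r t := by
    intro t ht
    set f : ℕ → ℝ := fun j => Real.exp (-(t * p j)) * (t * p j) ^ r / r.factorial with hf
    have hfpos : ∀ j, 0 < f j := by
      intro j
      have := hp j
      have := Real.exp_pos (-(t * p j))
      positivity
    have hfleM : ∀ j, f j ≤ M := by
      intro j
      have := pois_le r (mul_pos ht (hp j)) hr
      simp only [hf, hM]
      gcongr
    have hfle1 : ∀ j, f j ≤ 1 := fun j => (hfleM j).trans (M_lt_one r hr).le
    have hSf : Summable f := by
      refine Summable.of_nonneg_of_le (fun j => (hfpos j).le) (fun j => ?_)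
        (hps.mul_left (t ^ r / r.factorial))
      have h1 : Real.exp (-(t * p j)) ≤ 1 :=
        Real.exp_le_one_iff.mpr (by nlinarith [hp j])
      have h2 : (t * p j) ^ r ≤ t ^ r * p j := by
        rw [mul_pow]
        have : (p j) ^ r ≤ p j := by
          calc (p j) ^ r ≤ (p j) ^ 1 :=
            pow_le_pow_of_le_one (hp j).le (hple j) hr
          _ = p j := pow_one _
        nlinarith [pow_pos ht r, pow_nonneg (hp j).le r]
      simp only [hf]
      rw [div_le_iff₀ hfac]
      calc Real.exp (-(t * p j)) * (t * p j) ^ r ≤ 1 * (t ^ r * p j) :=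
            mul_le_mul h1 h2 (pow_nonneg (mul_pos ht (hp j)).le r) one_pos.le
        _ = t ^ r / r.factorial * p j * r.factorial := by field_simp
    have hSv : Summable (fun j => f j * (1 - f j)) := by
      apply Summable.of_nonneg_of_le (fun j => by nlinarith [hfpos j, hfle1 j])
        (fun j => by nlinarith [hfpos j, hfle1 j]) hSf
    have hPhi : Phi p r t = ∑' j, f j := rfl
    have hVar : Var p r t = ∑' j, f j * (1 - f j) := rfl
    -- find index where t * p j ≠ r
    have hex : ∃ j, t * p j ≠ (r : ℝ) := by
      by_contra h
      push_neg at h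
      have hcon : ∀ j, p j = (r:ℝ) / t := by
        intro j
        rw [eq_div_iff ht.ne']
        linarith [h j]
      have hsc : Summable (fun _ : ℕ => (r:ℝ) / t) := hps.congr hcon
      have := (summable_const_iff ((r:ℝ)/t)).mp hsc
      have hr0 : (0:ℝ) < r := by exact_mod_cast hr
      rw [div_eq_zero_iff] at this
      rcases this with h1 | h1 <;> linarith
    obtain ⟨j0, hj0⟩ := hex
    have hfj0 : f j0 < M := by
      simp only [hf, hM]
      exact div_lt_div_of_pos_right (pois_lt r (mul_pos ht (hp j0)) hr hj0) hfac
    constructor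
    · rw [hPhi, hVar]
      refine Summable.tsum_lt_tsum (i := 0) (fun j => by nlinarith [hfpos j, hfle1 j]) ?_ hSv hSf
      nlinarith [hfpos 0, hfle1 0]
    · rw [hPhi, hVar, ← tsum_mul_left]
      refine Summable.tsum_lt_tsum (i := j0) (fun j => by nlinarith [hfpos j, hfleM j]) ?_
        (hSf.mul_left k) hSv
      nlinarith [hfpos j0]
  refine ⟨hk0, main, ?_⟩
  constructor
  · intro h
    apply tendsto_atTop_mono' _ _ h
    filter_upwards [eventually_gt_atTop 0] with t ht
    exact (main t ht).1.le
  · intro h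
    have hk' : Tendsto (fun t => k * Phi p r t) atTop atTop := h.const_mul_atTop hk0
    apply tendsto_atTop_mono' _ _ hk'
    filter_upwards [eventually_gt_atTop 0] with t ht
    exact (main t ht).2.le
end

section
/- If for some r ≥ 1, Φ_r(t) → ∞ as t → ∞, then Φ_s(t) → ∞ for all 1 ≤ s ≤ r; and if sup_t Φ_r(t) < ∞ for some r ≥ 1, then sup_t Φ_s(t) < ∞ for all s ≥ r. -/
open Real Filter

lemma pow_le_factorial_mul_exp (x : ℝ) (hx : 0 ≤ x) (k : ℕ) :
    x ^ k ≤ k.factorial * Real.exp x := by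
  have h := Real.sum_le_exp_of_nonneg hx (k + 1)
  have h2 : x ^ k / k.factorial ≤ ∑ i ∈ Finset.range (k + 1), x ^ i / i.factorial := by
    exact Finset.single_le_sum (f := fun i : ℕ => x ^ i / (i.factorial : ℝ))
      (fun i _ => by positivity) (Finset.self_mem_range_succ k)
  have hk : (0:ℝ) < k.factorial := by positivity
  calc x ^ k = (x ^ k / k.factorial) * k.factorial := by field_simp
    _ ≤ Real.exp x * k.factorial := mul_le_mul_of_nonneg_right (h2.trans h) hk.le
    _ = k.factorial * Real.exp x := mul_comm _ _

lemma exp_neg_mul_pow_le (x : ℝ) (hx : 0 ≤ x) (k : ℕ) :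
    Real.exp (-x) * x ^ k ≤ k.factorial := by
  have h := pow_le_factorial_mul_exp x hx k
  calc Real.exp (-x) * x ^ k ≤ Real.exp (-x) * (k.factorial * Real.exp x) :=
        mul_le_mul_of_nonneg_left h (Real.exp_pos _).le
    _ = k.factorial * (Real.exp (-x) * Real.exp x) := by ring
    _ = k.factorial := by rw [← Real.exp_add]; simp

lemma key_A {s r : ℕ} (hsr : s ≤ r) (x : ℝ) (hx : 0 ≤ x) :
    Real.exp (-(2 * x)) * (2 * x) ^ r / r.factorial ≤
      (2 ^ r * s.factorial * (r - s).factorial / r.factorial) *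
        (Real.exp (-x) * x ^ s / s.factorial) := by
  have h1 : Real.exp (-x) * x ^ (r - s) ≤ (r - s).factorial := exp_neg_mul_pow_le x hx _
  have hxr : x ^ r = x ^ s * x ^ (r - s) := by rw [← pow_add]; congr 1; omega
  have e2 : Real.exp (-(2 * x)) = Real.exp (-x) * Real.exp (-x) := by
    rw [← Real.exp_add]; ring_nf
  have hrf : (0:ℝ) < r.factorial := by positivity
  have hsf : (0:ℝ) < s.factorial := by positivity
  calc Real.exp (-(2 * x)) * (2 * x) ^ r / r.factorial
      = ((2:ℝ) ^ r / r.factorial) * (Real.exp (-x) * x ^ s) * (Real.exp (-x) * x ^ (r - s)) := by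
        rw [e2, mul_pow, hxr]; ring
    _ ≤ ((2:ℝ) ^ r / r.factorial) * (Real.exp (-x) * x ^ s) * (r - s).factorial := by
        apply mul_le_mul_of_nonneg_left h1; positivity
    _ = (2 ^ r * s.factorial * (r - s).factorial / r.factorial) *
          (Real.exp (-x) * x ^ s / s.factorial) := by field_simp

lemma key_B {r s : ℕ} (hrs : r ≤ s) (x : ℝ) (hx : 0 ≤ x) :
    Real.exp (-x) * x ^ s / s.factorial ≤
      (r.factorial * 2 ^ s * (s - r).factorial / s.factorial) *
        (Real.exp (-(x / 2)) * (x / 2) ^ r / r.factorial) := by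
  have h1 : Real.exp (-(x / 2)) * (x / 2) ^ (s - r) ≤ (s - r).factorial :=
    exp_neg_mul_pow_le (x / 2) (by linarith) _
  have hxr : x ^ s = (2:ℝ) ^ s * ((x / 2) ^ r * (x / 2) ^ (s - r)) := by
    rw [← pow_add, show r + (s - r) = s from by omega, div_pow]
    field_simp
  have e2 : Real.exp (-x) = Real.exp (-(x / 2)) * Real.exp (-(x / 2)) := by
    rw [← Real.exp_add]; ring_nf
  have hrf : (0:ℝ) < r.factorial := by positivity
  have hsf : (0:ℝ) < s.factorial := by positivity
  calc Real.exp (-x) * x ^ s / s.factorial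
      = ((2:ℝ) ^ s / s.factorial) * (Real.exp (-(x / 2)) * (x / 2) ^ r) *
          (Real.exp (-(x / 2)) * (x / 2) ^ (s - r)) := by
        rw [e2, hxr]; ring
    _ ≤ ((2:ℝ) ^ s / s.factorial) * (Real.exp (-(x / 2)) * (x / 2) ^ r) * (s - r).factorial := by
        apply mul_le_mul_of_nonneg_left h1; positivity
    _ = (r.factorial * 2 ^ s * (s - r).factorial / s.factorial) *
          (Real.exp (-(x / 2)) * (x / 2) ^ r / r.factorial) := by field_simp

lemma summable_phi_term (p : ℕ → ℝ) (hp : ∀ j, 0 < p j) (hdec : ∀ j, p (j + 1) ≤ p j)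
    (hsum : ∑' j : ℕ, p j = 1) {r : ℕ} (hr : 1 ≤ r) {t : ℝ} (ht : 0 ≤ t) :
    Summable (fun j => Real.exp (-(t * p j)) * (t * p j) ^ r / r.factorial) := by
  have hsp : Summable p := by
    by_contra h
    rw [tsum_eq_zero_of_not_summable h] at hsum; norm_num at hsum
  have hle : ∀ j, p j ≤ p 0 := fun j => (antitone_nat_of_succ_le hdec) (Nat.zero_le j)
  have hbound : ∀ j, Real.exp (-(t * p j)) * (t * p j) ^ r / r.factorial ≤
      (t ^ r * p 0 ^ (r - 1) / r.factorial) * p j := ?_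
  refine Summable.of_nonneg_of_le (fun j => div_nonneg (mul_nonneg (Real.exp_pos _).le
    (pow_nonneg (mul_nonneg ht (hp j).le) r)) (Nat.cast_nonneg _)) hbound (hsp.mul_left _)
  intro j
  have hx : 0 ≤ t * p j := mul_nonneg ht (hp j).le
  have he : Real.exp (-(t * p j)) ≤ 1 := by
    calc Real.exp (-(t * p j)) ≤ Real.exp 0 := Real.exp_le_exp.mpr (by linarith)
      _ = 1 := Real.exp_zero
  have hpow : p j ^ r = p j ^ (r - 1) * p j := by
    rw [← pow_succ]; congr 1; omega
  calc Real.exp (-(t * p j)) * (t * p j) ^ r / r.factorial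
      ≤ 1 * (t * p j) ^ r / r.factorial := by gcongr
    _ = (t ^ r * p j ^ (r - 1) / r.factorial) * p j := by
        rw [one_mul, mul_pow, hpow]; ring
    _ ≤ (t ^ r * p 0 ^ (r - 1) / r.factorial) * p j := by
        gcongr <;> first | exact (hp j).le | exact hle j

lemma phi_le_A (p : ℕ → ℝ) (hp : ∀ j, 0 < p j) (hdec : ∀ j, p (j + 1) ≤ p j)
    (hsum : ∑' j : ℕ, p j = 1) {s r : ℕ} (hs : 1 ≤ s) (hsr : s ≤ r) {t : ℝ} (ht : 0 ≤ t) :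
    Phi p r (2 * t) ≤ (2 ^ r * s.factorial * (r - s).factorial / r.factorial) * Phi p s t := by
  unfold Phi
  rw [← tsum_mul_left]
  apply Summable.tsum_le_tsum _ (summable_phi_term p hp hdec hsum (hs.trans hsr) (by linarith))
    ((summable_phi_term p hp hdec hsum hs ht).mul_left _)
  intro j
  have h2 : (2 * t) * p j = 2 * (t * p j) := by ring
  rw [h2]
  exact key_A hsr (t * p j) (mul_nonneg ht (hp j).le)

lemma phi_le_B (p : ℕ → ℝ) (hp : ∀ j, 0 < p j) (hdec : ∀ j, p (j + 1) ≤ p j)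
    (hsum : ∑' j : ℕ, p j = 1) {s r : ℕ} (hr : 1 ≤ r) (hrs : r ≤ s) {t : ℝ} (ht : 0 ≤ t) :
    Phi p s t ≤ (r.factorial * 2 ^ s * (s - r).factorial / s.factorial) * Phi p r (t / 2) := by
  unfold Phi
  rw [← tsum_mul_left]
  apply Summable.tsum_le_tsum _ (summable_phi_term p hp hdec hsum (hr.trans hrs) ht)
    ((summable_phi_term p hp hdec hsum hr (by linarith : (0:ℝ) ≤ t / 2)).mul_left _)
  intro j
  have h2 : (t / 2) * p j = (t * p j) / 2 := by ring
  rw [h2]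
  exact key_B hrs (t * p j) (mul_nonneg ht (hp j).le)

theorem stmt_7 (p : ℕ → ℝ) (hp : ∀ j, 0 < p j) (hdec : ∀ j, p (j + 1) ≤ p j)
    (hsum : ∑' j : ℕ, p j = 1) (r : ℕ) (hr : 1 ≤ r) :
    (Filter.Tendsto (fun t => Phi p r t) Filter.atTop Filter.atTop →
      ∀ s : ℕ, 1 ≤ s → s ≤ r →
        Filter.Tendsto (fun t => Phi p s t) Filter.atTop Filter.atTop) ∧
    ((∃ M : ℝ, ∀ t : ℝ, 0 < t → Phi p r t ≤ M) →
      ∀ s : ℕ, r ≤ s → ∃ M : ℝ, ∀ t : ℝ, 0 < t → Phi p s t ≤ M) := by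
  constructor
  · intro h s hs hsr
    set C : ℝ := 2 ^ r * s.factorial * (r - s).factorial / r.factorial with hC
    have hCpos : 0 < C := by positivity
    have h2t : Tendsto (fun t : ℝ => Phi p r (2 * t)) atTop atTop :=
      h.comp (tendsto_id.const_mul_atTop (by norm_num : (0:ℝ) < 2))
    have hdiv : Tendsto (fun t : ℝ => C⁻¹ * Phi p r (2 * t)) atTop atTop :=
      h2t.const_mul_atTop (by positivity)
    apply tendsto_atTop_mono' _ _ hdiv
    filter_upwards [eventually_ge_atTop (0:ℝ)] with t ht
    have := phi_le_A p hp hdec hsum hs hsr ht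
    calc C⁻¹ * Phi p r (2 * t) ≤ C⁻¹ * (C * Phi p s t) := by
          apply mul_le_mul_of_nonneg_left this (by positivity)
      _ = Phi p s t := by field_simp
  · rintro ⟨M, hM⟩ s hrs
    set C : ℝ := r.factorial * 2 ^ s * (s - r).factorial / s.factorial with hC
    refine ⟨C * M, fun t ht => ?_⟩
    have h1 := phi_le_B p hp hdec hsum hr hrs ht.le
    have h2 : Phi p r (t / 2) ≤ M := hM (t / 2) (by linarith)
    calc Phi p s t ≤ C * Phi p r (t / 2) := h1
      _ ≤ C * M := mul_le_mul_of_nonneg_left h2 (by positivity)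
end

section
/- If sup_{t>0} Φ_r(t) < ∞ for some r ≥ 1, then sup_{t>0} Φ_1(t) < ∞. -/
theorem stmt_8 (p : ℕ → ℝ) (hp : ∀ j, 0 < p j) (hdec : ∀ j, p (j + 1) ≤ p j)
    (hsum : ∑' j : ℕ, p j = 1) (r : ℕ) (hr : 1 ≤ r)
    (hbdd : ∃ M : ℝ, ∀ t : ℝ, 0 < t → Phi p r t ≤ M) :
    ∃ M : ℝ, ∀ t : ℝ, 0 < t → Phi p 1 t ≤ M := by
  classical
  obtain ⟨M, hM⟩ := hbdd
  have psum : Summable p := by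
    by_contra h
    rw [tsum_eq_zero_of_not_summable h] at hsum
    norm_num at hsum
  have pmono : ∀ ⦃i k : ℕ⦄, i ≤ k → p k ≤ p i := fun i k h =>
    antitone_nat_of_succ_le hdec h
  have ple1 : ∀ j, p j ≤ 1 := by
    intro j
    rw [← hsum]
    exact Summable.le_tsum psum j (fun i _ => (hp i).le)
  -- summability of the Phi series
  have hsummable : ∀ (q : ℕ), 1 ≤ q → ∀ t : ℝ, 0 ≤ t →
      Summable (fun j => Real.exp (-(t * p j)) * (t * p j) ^ q / (q.factorial : ℝ)) := by
    intro q hq t ht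
    refine Summable.of_nonneg_of_le (f := fun j => (t ^ q / (q.factorial : ℝ)) * p j)
      (fun j => by have := (hp j).le; positivity) ?_ (psum.mul_left _)
    intro j
    show Real.exp (-(t * p j)) * (t * p j) ^ q / (q.factorial : ℝ) ≤ t ^ q / (q.factorial : ℝ) * p j
    have hx : 0 ≤ t * p j := mul_nonneg ht (hp j).le
    have he : Real.exp (-(t * p j)) ≤ 1 := Real.exp_le_one_iff.mpr (by linarith)
    have hpow : (t * p j) ^ q ≤ t ^ q * p j := by
      rw [mul_pow]
      have h1 : (p j) ^ q ≤ (p j) ^ 1 := pow_le_pow_of_le_one (hp j).le (ple1 j) hq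
      rw [pow_one] at h1
      have : 0 ≤ t ^ q := pow_nonneg ht q
      nlinarith
    have hfac : (0:ℝ) < (q.factorial : ℝ) := by positivity
    rw [div_le_iff₀ hfac]
    calc Real.exp (-(t * p j)) * (t * p j) ^ q ≤ 1 * (t ^ q * p j) := by
          apply mul_le_mul he hpow (by positivity) one_pos.le
      _ = t ^ q / (q.factorial : ℝ) * p j * (q.factorial : ℝ) := by field_simp
  have hM0 : 0 ≤ M :=
    le_trans (tsum_nonneg fun j => by have := (hp j).le; positivity) (hM 1 one_pos)
  set c : ℝ := Real.exp (-1) * (1/2) ^ r / (r.factorial : ℝ) with hc_def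
  have hc : 0 < c := by positivity
  set N : ℕ := ⌈M / c⌉₊ + 1 with hN_def
  have hN1 : 1 ≤ N := Nat.le_add_left 1 _
  -- key halving property
  have key : ∀ j, p (j + N) ≤ p j / 2 := by
    intro j
    by_contra hcon
    push_neg at hcon
    set s : ℝ := 1 / p j with hs_def
    have hs : 0 < s := by have := hp j; positivity
    have hterm : ∀ i ∈ Finset.Icc j (j + N),
        c ≤ Real.exp (-(s * p i)) * (s * p i) ^ r / (r.factorial : ℝ) := by
      intro i hi
      obtain ⟨h1, h2⟩ := Finset.mem_Icc.mp hi
      have hpi_le : p i ≤ p j := pmono h1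
      have hpi_gt : p j / 2 < p i := lt_of_lt_of_le hcon (pmono h2)
      have hx_eq : s * p i = p i / p j := by rw [hs_def, div_mul_eq_mul_div, one_mul]
      have hup : s * p i ≤ 1 := by rw [hx_eq]; exact (div_le_one (hp j)).mpr hpi_le
      have hlo : (1:ℝ)/2 ≤ s * p i := by
        rw [hx_eq, le_div_iff₀ (hp j)]
        linarith
      have e1 : Real.exp (-1) ≤ Real.exp (-(s * p i)) := Real.exp_le_exp.mpr (by linarith)
      have e2 : ((1:ℝ)/2) ^ r ≤ (s * p i) ^ r := by
        apply pow_le_pow_left₀ (by norm_num) hlo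
      have hfac : (0:ℝ) < (r.factorial : ℝ) := by positivity
      have e3 := mul_le_mul e1 e2 (by positivity) (Real.exp_pos _).le
      rw [hc_def]
      exact (div_le_div_iff_of_pos_right hfac).mpr e3
    have hcard : (Finset.Icc j (j + N)).card = N + 1 := by
      rw [Nat.card_Icc]; omega
    have hsum_ge : ((N:ℝ) + 1) * c ≤
        ∑ i ∈ Finset.Icc j (j + N), Real.exp (-(s * p i)) * (s * p i) ^ r / (r.factorial : ℝ) := by
      have := Finset.card_nsmul_le_sum (Finset.Icc j (j + N)) _ c hterm
      rw [hcard] at this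
      simpa [nsmul_eq_mul, add_comm] using this
    have hsum_le : ∑ i ∈ Finset.Icc j (j + N),
        Real.exp (-(s * p i)) * (s * p i) ^ r / (r.factorial : ℝ) ≤ M := by
      calc _ ≤ Phi p r s := Summable.sum_le_tsum _
              (fun i _ => by have := (hp i).le; have := hs.le; positivity)
              (hsummable r hr s hs.le)
        _ ≤ M := hM s hs
    have hceil : M / c ≤ (⌈M / c⌉₊ : ℝ) := Nat.le_ceil _
    have hNc : ((N:ℝ)) = (⌈M / c⌉₊ : ℝ) + 1 := by rw [hN_def]; push_cast; ring
    have hMc : M ≤ (⌈M / c⌉₊ : ℝ) * c := (div_le_iff₀ hc).mp hceil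
    nlinarith
  -- iterated halving
  have key2 : ∀ k j, p (j + k * N) ≤ p j / 2 ^ k := by
    intro k
    induction k with
    | zero => intro j; simpa using le_rfl
    | succ k ih =>
      intro j
      have h1 : p (j + k * N + N) ≤ p (j + k * N) / 2 := key (j + k * N)
      have h2 : p (j + k * N) ≤ p j / 2 ^ k := ih j
      have heq : j + (k + 1) * N = j + k * N + N := by ring
      rw [heq, pow_succ]
      calc p (j + k * N + N) ≤ p (j + k * N) / 2 := h1
        _ ≤ p j / 2 ^ k / 2 := by linarith
        _ = p j / (2 ^ k * 2) := by rw [div_div]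
  -- geometric sum lemma
  have geo : ∀ K : ℕ, ∑ m ∈ Finset.range (K * N), ((1:ℝ)/2) ^ (m / N) ≤ 2 * N := by
    have formula : ∀ K : ℕ, ∑ m ∈ Finset.range (K * N), ((1:ℝ)/2) ^ (m / N)
        = (N : ℝ) * ∑ k ∈ Finset.range K, ((1:ℝ)/2) ^ k := by
      intro K
      induction K with
      | zero => simp
      | succ K ih =>
        have hsplit : ∑ m ∈ Finset.Ico 0 (K * N), ((1:ℝ)/2) ^ (m / N)
            + ∑ m ∈ Finset.Ico (K * N) ((K+1) * N), ((1:ℝ)/2) ^ (m / N)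
            = ∑ m ∈ Finset.Ico 0 ((K+1) * N), ((1:ℝ)/2) ^ (m / N) :=
          Finset.sum_Ico_consecutive _ (Nat.zero_le _) (by nlinarith)
        have hIco : ∑ m ∈ Finset.Ico (K * N) ((K+1) * N), ((1:ℝ)/2) ^ (m / N)
            = (N : ℝ) * ((1:ℝ)/2) ^ K := by
          have hconst : ∀ m ∈ Finset.Ico (K * N) ((K+1) * N),
              ((1:ℝ)/2) ^ (m / N) = ((1:ℝ)/2) ^ K := by
            intro m hm
            obtain ⟨hlo, hhi⟩ := Finset.mem_Ico.mp hm
            rw [Nat.div_eq_of_lt_le hlo hhi]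
          have hcard' : (K+1) * N - K * N = N := by
            have : (K+1) * N = K * N + N := by ring
            omega
          rw [Finset.sum_congr rfl hconst, Finset.sum_const, Nat.card_Ico, hcard',
            nsmul_eq_mul]
        rw [← Finset.range_eq_Ico, ← Finset.range_eq_Ico] at hsplit
        rw [← hsplit, ih, hIco, Finset.sum_range_succ]
        ring
    intro K
    rw [formula]
    have hgs : ∑ k ∈ Finset.range K, ((1:ℝ)/2) ^ k ≤ 2 := by
      rw [geom_sum_eq (by norm_num)]
      have : (0:ℝ) ≤ (1/2) ^ K := by positivity
      rw [div_le_iff_of_neg (by norm_num : (1:ℝ)/2 - 1 < 0)]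
      linarith
    have : (0:ℝ) ≤ (N:ℝ) := Nat.cast_nonneg _
    nlinarith
  -- main bound
  refine ⟨(r.factorial : ℝ) * M + 2 * N, fun t ht => ?_⟩
  rw [Phi]
  apply Summable.tsum_le_of_sum_le (hsummable 1 le_rfl t ht.le)
  intro F
  rw [← Finset.sum_filter_add_sum_filter_not F (fun j => 1 ≤ t * p j)]
  have hbound1 : ∑ j ∈ F.filter (fun j => 1 ≤ t * p j),
      Real.exp (-(t * p j)) * (t * p j) ^ 1 / ((1:ℕ).factorial : ℝ)
      ≤ (r.factorial : ℝ) * M := by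
    calc ∑ j ∈ F.filter (fun j => 1 ≤ t * p j),
          Real.exp (-(t * p j)) * (t * p j) ^ 1 / ((1:ℕ).factorial : ℝ)
        ≤ ∑ j ∈ F.filter (fun j => 1 ≤ t * p j),
          (r.factorial : ℝ) * (Real.exp (-(t * p j)) * (t * p j) ^ r / (r.factorial : ℝ)) := by
          apply Finset.sum_le_sum
          intro j hj
          have hx : 1 ≤ t * p j := (Finset.mem_filter.mp hj).2
          have hfac : (0:ℝ) < (r.factorial : ℝ) := by positivity
          have hpow : t * p j ≤ (t * p j) ^ r := le_self_pow₀ hx (by omega)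
          have hexp : (0:ℝ) ≤ Real.exp (-(t * p j)) := (Real.exp_pos _).le
          have hcancel : (r.factorial : ℝ) *
              (Real.exp (-(t * p j)) * (t * p j) ^ r / (r.factorial : ℝ))
              = Real.exp (-(t * p j)) * (t * p j) ^ r := by field_simp
          rw [Nat.factorial_one, Nat.cast_one, div_one, pow_one, hcancel]
          exact mul_le_mul_of_nonneg_left hpow hexp
      _ = (r.factorial : ℝ) * ∑ j ∈ F.filter (fun j => 1 ≤ t * p j),
          Real.exp (-(t * p j)) * (t * p j) ^ r / (r.factorial : ℝ) := by
          rw [Finset.mul_sum]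
      _ ≤ (r.factorial : ℝ) * M := by
          apply mul_le_mul_of_nonneg_left _ (by positivity)
          calc _ ≤ Phi p r t := Summable.sum_le_tsum _
                  (fun i _ => by have := (hp i).le; have := ht.le; positivity)
                  (hsummable r hr t ht.le)
            _ ≤ M := hM t ht
  have hbound2 : ∑ j ∈ F.filter (fun j => ¬ 1 ≤ t * p j),
      Real.exp (-(t * p j)) * (t * p j) ^ 1 / ((1:ℕ).factorial : ℝ)
      ≤ 2 * N := by
    set FR := F.filter (fun j => ¬ 1 ≤ t * p j) with hFR_def
    rcases FR.eq_empty_or_nonempty with hFR | hFR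
    · rw [hFR, Finset.sum_empty]; positivity
    · set j0 := FR.min' hFR with hj0_def
      have hj0mem : j0 ∈ FR := FR.min'_mem hFR
      have hj0lt : t * p j0 < 1 := not_le.mp (Finset.mem_filter.mp hj0mem).2
      have hstep : ∀ j ∈ FR,
          Real.exp (-(t * p j)) * (t * p j) ^ 1 / ((1:ℕ).factorial : ℝ)
          ≤ ((1:ℝ)/2) ^ ((j - j0) / N) := by
        intro j hj
        have hjge : j0 ≤ j := FR.min'_le j hj
        have hxnn : 0 ≤ t * p j := mul_nonneg ht.le (hp j).le
        have he : Real.exp (-(t * p j)) ≤ 1 := Real.exp_le_one_iff.mpr (by linarith)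
        have h1 : Real.exp (-(t * p j)) * (t * p j) ^ 1 / ((1:ℕ).factorial : ℝ)
            ≤ t * p j := by
          rw [Nat.factorial_one, Nat.cast_one, div_one, pow_one]
          nlinarith
        set k := (j - j0) / N with hk_def
        have hle : j0 + k * N ≤ j := by
          have h := Nat.div_mul_le_self (j - j0) N
          rw [← hk_def] at h
          omega
        have h2 : p j ≤ p j0 / 2 ^ k :=
          le_trans (pmono hle) (key2 k j0)
        have h3 : t * p j ≤ (1:ℝ) / 2 ^ k := by
          have h2pow : (0:ℝ) < 2 ^ k := by positivity
          calc t * p j ≤ t * (p j0 / 2 ^ k) :=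
                mul_le_mul_of_nonneg_left h2 ht.le
            _ = (t * p j0) / 2 ^ k := by ring
            _ ≤ 1 / 2 ^ k := by
                gcongr
        calc _ ≤ t * p j := h1
          _ ≤ (1:ℝ) / 2 ^ k := h3
          _ = ((1:ℝ)/2) ^ k := by rw [div_pow, one_pow]
      calc ∑ j ∈ FR, Real.exp (-(t * p j)) * (t * p j) ^ 1 / ((1:ℕ).factorial : ℝ)
          ≤ ∑ j ∈ FR, ((1:ℝ)/2) ^ ((j - j0) / N) := Finset.sum_le_sum hstep
        _ = ∑ m ∈ FR.image (fun j => j - j0), ((1:ℝ)/2) ^ (m / N) := by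
            rw [Finset.sum_image]
            intro a ha b hb hab
            have ha' : j0 ≤ a := FR.min'_le a ha
            have hb' : j0 ≤ b := FR.min'_le b hb
            simp only at hab
            omega
        _ ≤ ∑ m ∈ Finset.range (((FR.image (fun j => j - j0)).sup id + 1) * N),
              ((1:ℝ)/2) ^ (m / N) := by
            apply Finset.sum_le_sum_of_subset_of_nonneg
            · intro m hm
              rw [Finset.mem_range]
              have h1 : m ≤ (FR.image (fun j => j - j0)).sup id :=
                Finset.le_sup (f := id) hm
              nlinarith [hN1]
            · intro i _ _; positivity
        _ ≤ 2 * N := geo _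
  calc _ ≤ (r.factorial : ℝ) * M + 2 * N := add_le_add hbound1 hbound2
    _ = _ := rfl
end

section
/- Let g: (0,∞) → (0,∞) be continuous with g(2t)/√(g(t)) → k as t → ∞, for some 0 < k < ∞. Then g(t) → k² as t → ∞. -/
open Filter Real

lemma key_lemma (L : ℝ → ℝ) (hL : ContinuousOn L (Set.Ioi (0:ℝ)))
    (h : Tendsto (fun t => L (2*t) - L t / 2) atTop (nhds 0)) :
    Tendsto L atTop (nhds 0) := by
  rw [NormedAddCommGroup.tendsto_nhds_zero] at h ⊢
  intro ε hε
  obtain ⟨T₀, hT₀⟩ := (eventually_atTop.1 (h (ε/4) (by positivity)))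
  set T : ℝ := max T₀ 1 with hTdef
  have hT1 : (1:ℝ) ≤ T := le_max_right _ _
  have hTpos : (0:ℝ) < T := lt_of_lt_of_le one_pos hT1
  have he : ∀ t : ℝ, T ≤ t → |L (2*t) - L t / 2| ≤ ε/4 := by
    intro t ht
    exact le_of_lt (by simpa using hT₀ t (le_trans (le_max_left _ _) ht))
  -- bound on [T, 2T]
  have hcompact : IsCompact (Set.Icc T (2*T)) := isCompact_Icc
  have hsub : Set.Icc T (2*T) ⊆ Set.Ioi (0:ℝ) := fun x hx => lt_of_lt_of_le hTpos hx.1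
  obtain ⟨M, hM⟩ := hcompact.exists_bound_of_continuousOn (hL.mono hsub)
  have hMnn : 0 ≤ M := le_trans (norm_nonneg _) (hM T ⟨le_refl T, by linarith⟩)
  -- induction
  have main : ∀ n : ℕ, ∀ t : ℝ, T ≤ t → t ≤ 2*T → |L (2^n * t)| ≤ (1/2)^n * M + ε/2 := by
    intro n
    induction n with
    | zero => intro t ht1 ht2
              simpa using le_trans (hM t ⟨ht1, ht2⟩) (by linarith)
    | succ n ih =>
        intro t ht1 ht2
        have hu : T ≤ 2^n * t := le_trans ht1 (le_mul_of_one_le_left (le_trans hTpos.le ht1) (one_le_pow₀ one_le_two))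
        have h1 := he (2^n * t) hu
        have h2 := ih t ht1 ht2
        have heq : (2:ℝ)^(n+1) * t = 2 * (2^n * t) := by ring
        rw [heq]
        have : |L (2 * (2^n * t))| ≤ |L (2^n * t)| / 2 + ε/4 := by
          have := abs_sub_abs_le_abs_sub (L (2 * (2^n * t))) (L (2^n * t) / 2)
          rw [abs_div] at this
          simp only [abs_two] at this
          linarith
        calc |L (2 * (2^n * t))| ≤ |L (2^n * t)| / 2 + ε/4 := this
          _ ≤ ((1/2)^n * M + ε/2) / 2 + ε/4 := by linarith
          _ = (1/2)^(n+1) * M + ε/2 := by ring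
  -- choose N
  obtain ⟨N, hN⟩ : ∃ N : ℕ, ((1:ℝ)/2)^N * M < ε/2 := by
    obtain ⟨N, hN⟩ := exists_pow_lt_of_lt_one (show (0:ℝ) < ε/(2*(M+1)) by positivity) (by norm_num : (1:ℝ)/2 < 1)
    refine ⟨N, ?_⟩
    have : ((1:ℝ)/2)^N * M ≤ ((1:ℝ)/2)^N * (M+1) := by
      apply mul_le_mul_of_nonneg_left (by linarith) (by positivity)
    calc ((1:ℝ)/2)^N * M ≤ ((1:ℝ)/2)^N * (M+1) := this
      _ < (ε/(2*(M+1))) * (M+1) := by apply mul_lt_mul_of_pos_right hN (by linarith)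
      _ = ε/2 := by field_simp
  -- final
  rw [eventually_atTop]
  refine ⟨2^N * T, fun s hs => ?_⟩
  have hsT : (2:ℝ)^N ≤ s / T := (le_div_iff₀ hTpos).2 hs
  have hspos : 0 < s := lt_of_lt_of_le (by positivity) hs
  have hsT0 : 0 < s / T := div_pos hspos hTpos
  have hlogN : (N:ℝ) ≤ Real.logb 2 (s/T) := by
    have := Real.logb_le_logb_of_le (b := 2) (by norm_num) (by positivity) hsT
    rw [Real.logb_pow] at this
    simpa [Real.logb_self_eq_one] using this
  have hlognn : 0 ≤ Real.logb 2 (s/T) := le_trans (Nat.cast_nonneg N) hlogN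
  set m : ℕ := ⌊Real.logb 2 (s/T)⌋₊ with hm
  have hNm : N ≤ m := Nat.le_floor hlogN
  have hfl : (m:ℝ) ≤ Real.logb 2 (s/T) := Nat.floor_le hlognn
  have hfu : Real.logb 2 (s/T) < (m:ℝ) + 1 := Nat.lt_floor_add_one _
  have hrw : (2:ℝ) ^ (Real.logb 2 (s/T)) = s/T := Real.rpow_logb (by norm_num) (by norm_num) hsT0
  have hlow : (2:ℝ)^m ≤ s/T := by
    calc (2:ℝ)^m = (2:ℝ)^(m:ℝ) := (Real.rpow_natCast 2 m).symm
      _ ≤ (2:ℝ)^(Real.logb 2 (s/T)) := Real.rpow_le_rpow_of_exponent_le one_le_two hfl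
      _ = s/T := hrw
  have hup : s/T < (2:ℝ)^(m+1) := by
    calc s/T = (2:ℝ)^(Real.logb 2 (s/T)) := hrw.symm
      _ < (2:ℝ)^((m:ℝ)+1) := Real.rpow_lt_rpow_of_exponent_lt one_lt_two hfu
      _ = (2:ℝ)^(m+1) := by rw [← Real.rpow_natCast 2 (m+1)]; push_cast; ring_nf
  set t : ℝ := s / 2^m with ht
  have hpow : (0:ℝ) < 2^m := by positivity
  have ht1 : T ≤ t := by
    rw [ht, le_div_iff₀ hpow]
    have := (le_div_iff₀ hTpos).1 hlow
    linarith
  have ht2 : t ≤ 2*T := by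
    rw [ht, div_le_iff₀ hpow]
    have := (div_lt_iff₀ hTpos).1 hup
    have h2 : (2:ℝ)^(m+1) = 2 * 2^m := by ring
    nlinarith
  have hst : (2:ℝ)^m * t = s := by
    rw [ht]; field_simp
  have := main m t ht1 ht2
  rw [hst] at this
  have hpowle : ((1:ℝ)/2)^m ≤ ((1:ℝ)/2)^N :=
    pow_le_pow_of_le_one (by norm_num) (by norm_num) hNm
  have : |L s| ≤ (1/2)^N * M + ε/2 := le_trans this (by nlinarith)
  calc ‖L s‖ = |L s| := rfl
    _ ≤ (1/2)^N * M + ε/2 := this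
    _ < ε/2 + ε/2 := by linarith
    _ = ε := by ring
theorem stmt_10 (g : ℝ → ℝ) (k : ℝ) (hk : 0 < k)
    (hcont : ContinuousOn g (Set.Ioi (0 : ℝ)))
    (hpos : ∀ t : ℝ, 0 < t → 0 < g t)
    (hlim : Filter.Tendsto (fun t => g (2 * t) / Real.sqrt (g t))
      Filter.atTop (nhds k)) :
    Filter.Tendsto g Filter.atTop (nhds (k ^ 2)) := by
  set L : ℝ → ℝ := fun t => Real.log (g t) - 2 * Real.log k with hLdef
  have hLcont : ContinuousOn L (Set.Ioi (0:ℝ)) := by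
    apply ContinuousOn.sub _ continuousOn_const
    exact hcont.log (fun t ht => (hpos t ht).ne')
  -- log composed limit
  have hlog : Tendsto (fun t => Real.log (g (2*t) / Real.sqrt (g t))) atTop (nhds (Real.log k)) :=
    ((Real.continuousAt_log hk.ne').tendsto.comp hlim)
  have heq : ∀ᶠ t in atTop, Real.log (g (2*t) / Real.sqrt (g t)) = L (2*t) - L t / 2 + Real.log k := by
    filter_upwards [eventually_gt_atTop 0] with t ht
    have hg2 : 0 < g (2*t) := hpos _ (by linarith)
    have hg : 0 < g t := hpos _ ht
    rw [Real.log_div hg2.ne' (Real.sqrt_ne_zero'.2 hg), Real.log_sqrt hg.le]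
    simp only [hLdef]
    ring
  have h2 : Tendsto (fun t => L (2*t) - L t / 2 + Real.log k) atTop (nhds (Real.log k)) :=
    hlog.congr' heq
  have h3 : Tendsto (fun t => L (2*t) - L t / 2) atTop (nhds 0) := by
    have := h2.sub_const (Real.log k)
    simpa using this
  have hL0 : Tendsto L atTop (nhds 0) := key_lemma L hLcont h3
  -- exponentiate
  have hexp : Tendsto (fun t => Real.exp (L t) * k^2) atTop (nhds (k^2)) := by
    have h1 : Tendsto (fun t => Real.exp (L t)) atTop (nhds 1) := by
      have := (Real.continuous_exp.tendsto 0).comp hL0; rw [Real.exp_zero] at this; exact this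
    simpa using h1.mul_const (k^2)
  apply hexp.congr'
  filter_upwards [eventually_gt_atTop 0] with t ht
  have hg : 0 < g t := hpos t ht
  simp only [hLdef]
  rw [Real.exp_sub, Real.exp_log hg]
  rw [show (2:ℝ) * Real.log k = Real.log (k^2) by rw [Real.log_pow]; push_cast; ring,
    Real.exp_log (by positivity)]
  field_simp
end

section
/- Define Φ_r(t) = ∑_j e^{-t p_j}(t p_j)^r/r! and m_j = #{l : 2^{-(j+1)} < p_l ≤ 2^{-j}}. If sup_j m_j = m* < ∞, then for every s ≥ 1, sup_{t>0} Φ_s(t) < ∞; more precisely for 2^j ≤ t < 2^{j+1}, s! Φ_s(t) ≤ m*(2 + 2^s ∑_{l≥0} 2^{ls} e^{-2^{l-1}}). -/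
/-- Number of frequencies in the dyadic band `(2^{-(j+1)}, 2^{-j}]`. -/
noncomputable def dyadicCount (p : ℕ → ℝ) (j : ℕ) : ℕ :=
  Set.ncard {l : ℕ | 1 / (2 : ℝ) ^ (j + 1) < p l ∧ p l ≤ 1 / (2 : ℝ) ^ j}

lemma aux_exp_pow_le {x : ℝ} (hx : 0 ≤ x) (hx1 : x ≤ 1) {s : ℕ} (hs : 1 ≤ s) :
    Real.exp (-x) * x ^ s ≤ x := by
  have h1 : Real.exp (-x) ≤ 1 := by
    rw [← Real.exp_zero]; exact Real.exp_le_exp.mpr (by linarith)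
  calc Real.exp (-x) * x ^ s ≤ 1 * x ^ s :=
        mul_le_mul_of_nonneg_right h1 (by positivity)
    _ = x ^ s := one_mul _
    _ ≤ x ^ 1 := pow_le_pow_of_le_one hx hx1 hs
    _ = x := pow_one x

lemma summable_g (s : ℕ) :
    Summable (fun l : ℕ => (2:ℝ) ^ (l * s) * Real.exp (-((2:ℝ) ^ l / 2))) := by
  have hgeo : Summable (fun l : ℕ => (((s+1).factorial : ℝ) * 2 ^ (s+1)) * (1/2 : ℝ) ^ l) :=
    (summable_geometric_of_lt_one (by norm_num) (by norm_num)).mul_left _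
  refine Summable.of_nonneg_of_le (fun l => by positivity) (fun l => ?_) hgeo
  have hy0 : (0:ℝ) < (2:ℝ) ^ l / 2 := by positivity
  have hexp : ((2:ℝ) ^ l / 2) ^ (s+1) / (s+1).factorial ≤ Real.exp ((2:ℝ) ^ l / 2) :=
    Real.pow_div_factorial_le_exp _ hy0.le _
  have h2 : Real.exp (-((2:ℝ) ^ l / 2)) ≤
      ((s+1).factorial : ℝ) / ((2:ℝ) ^ l / 2) ^ (s+1) := by
    rw [Real.exp_neg]
    have hpos : (0:ℝ) < ((2:ℝ) ^ l / 2) ^ (s+1) / (s+1).factorial := by positivity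
    calc (Real.exp ((2:ℝ) ^ l / 2))⁻¹
        ≤ (((2:ℝ) ^ l / 2) ^ (s+1) / (s+1).factorial)⁻¹ :=
          inv_anti₀ hpos hexp
      _ = ((s+1).factorial : ℝ) / ((2:ℝ) ^ l / 2) ^ (s+1) := by rw [inv_div]
  have e1 : ((2:ℝ) ^ l / 2) ^ (s+1) = (2:ℝ) ^ (l*s) * 2 ^ l / 2 ^ (s+1) := by
    rw [div_pow, ← pow_mul]
    congr 1
    rw [← pow_add]
    have hlm : l * (s + 1) = l * s + l := by ring
    rw [hlm]
  calc (2:ℝ) ^ (l * s) * Real.exp (-((2:ℝ) ^ l / 2))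
      ≤ (2:ℝ) ^ (l * s) * (((s+1).factorial : ℝ) / ((2:ℝ) ^ l / 2) ^ (s+1)) :=
        mul_le_mul_of_nonneg_left h2 (by positivity)
    _ = (((s+1).factorial : ℝ) * 2 ^ (s+1)) * (1/2 : ℝ) ^ l := by
        rw [e1, div_pow, one_pow]
        have h3 : ((2:ℝ) ^ (l*s)) ≠ 0 := by positivity
        have h4 : ((2:ℝ) ^ l) ≠ 0 := by positivity
        have h5 : ((2:ℝ) ^ (s+1)) ≠ 0 := by positivity
        field_simp

lemma core (p : ℕ → ℝ) (hp : ∀ j, 0 < p j) (hsum : ∑' j : ℕ, p j = 1)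
    (mstar : ℕ) (hm : ∀ j, dyadicCount p j ≤ mstar)
    (s : ℕ) (hs : 1 ≤ s) (j : ℕ) (t : ℝ)
    (ht1 : (2 : ℝ) ^ j ≤ t) (ht2 : t < (2 : ℝ) ^ (j + 1)) :
    (s.factorial : ℝ) * Phi p s t ≤
      (mstar : ℝ) * (2 + 2 ^ s * ∑' l : ℕ, (2 : ℝ) ^ (l * s) *
        Real.exp (-((2 : ℝ) ^ l / 2))) := by
  set S : ℝ := ∑' l : ℕ, (2 : ℝ) ^ (l * s) * Real.exp (-((2 : ℝ) ^ l / 2)) with hS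
  have hS0 : 0 ≤ S := tsum_nonneg fun l => by positivity
  have ht0 : 0 < t := lt_of_lt_of_le (by positivity) ht1
  have hps : Summable p := by
    by_contra h
    rw [tsum_eq_zero_of_not_summable h] at hsum
    norm_num at hsum
  have hple : ∀ l, p l ≤ 1 := by
    intro l
    rw [← hsum]
    exact Summable.le_tsum hps l fun m _ => (hp m).le
  have hex : ∀ l, ∃ k : ℕ, 1/(2:ℝ)^(k+1) < p l := by
    intro l
    obtain ⟨n, hn⟩ := pow_unbounded_of_one_lt (1 / p l) (one_lt_two (α := ℝ))
    refine ⟨n, ?_⟩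
    rw [div_lt_iff₀ (by positivity)]
    rw [div_lt_iff₀ (hp l)] at hn
    have h2n : (0:ℝ) < 2 ^ n := by positivity
    have : (2:ℝ) ^ (n+1) = 2 * 2 ^ n := by rw [pow_succ]; ring
    nlinarith [hp l]
  set K : ℕ → ℕ := fun l => Nat.find (hex l) with hKdef
  have hK1 : ∀ l, 1/(2:ℝ)^(K l + 1) < p l := fun l => Nat.find_spec (hex l)
  have hK2 : ∀ l, p l ≤ 1/(2:ℝ)^(K l) := by
    intro l
    rcases Nat.eq_zero_or_pos (K l) with h0 | hpos
    · rw [h0]; simpa using hple l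
    · have hmin := Nat.find_min (hex l) (show K l - 1 < K l by omega)
      push_neg at hmin
      have e : K l - 1 + 1 = K l := by omega
      rwa [e] at hmin
  have hband : ∀ k : ℕ, {l : ℕ | 1/(2:ℝ)^(k+1) < p l}.Finite := by
    intro k
    have h0 : Filter.Tendsto p Filter.atTop (nhds 0) := hps.tendsto_atTop_zero
    have hev : ∀ᶠ l in Filter.atTop, p l < 1/(2:ℝ)^(k+1) :=
      h0.eventually_lt_const (by positivity)
    obtain ⟨N, hN⟩ := Filter.eventually_atTop.mp hev
    apply Set.Finite.subset (Set.finite_Iio N)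
    intro l hl
    by_contra hlt
    simp only [Set.mem_Iio, not_lt] at hlt
    exact absurd (hN l hlt) (not_lt.mpr (Set.mem_setOf_eq ▸ hl).le)
  have hfib : ∀ (F : Finset ℕ) (k : ℕ), ((F.filter (fun l => K l = k)).card : ℝ) ≤ mstar := by
    intro F k
    have hsub : ↑(F.filter (fun l => K l = k)) ⊆
        {l : ℕ | 1/(2:ℝ)^(k+1) < p l ∧ p l ≤ 1/(2:ℝ)^k} := by
      intro l hl
      simp only [Finset.coe_filter, Set.mem_setOf_eq] at hl ⊢
      obtain ⟨-, hk⟩ := hl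
      subst hk
      exact ⟨hK1 l, hK2 l⟩
    have hfin : {l : ℕ | 1/(2:ℝ)^(k+1) < p l ∧ p l ≤ 1/(2:ℝ)^k}.Finite :=
      (hband k).subset fun l hl => hl.1
    have : (F.filter (fun l => K l = k)).card ≤ mstar := by
      calc (F.filter (fun l => K l = k)).card
          = (↑(F.filter (fun l => K l = k)) : Set ℕ).ncard := (Set.ncard_coe_finset _).symm
        _ ≤ {l : ℕ | 1/(2:ℝ)^(k+1) < p l ∧ p l ≤ 1/(2:ℝ)^k}.ncard :=
            Set.ncard_le_ncard hsub hfin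
        _ ≤ mstar := hm k
    exact_mod_cast this
  set C : ℕ → ℝ := fun k =>
    if k ≤ j then (2:ℝ)^s * 2^((j-k)*s) * Real.exp (-((2:ℝ)^(j-k)/2)) else 0 with hC
  set D : ℕ → ℝ := fun k => if k ≤ j then 0 else (1/2:ℝ)^(k - (j+1)) with hD
  have hC0 : ∀ k, 0 ≤ C k := by intro k; rw [hC]; dsimp only; split <;> positivity
  have hD0 : ∀ k, 0 ≤ D k := by intro k; rw [hD]; dsimp only; split <;> positivity
  -- pointwise bound
  have hpt : ∀ l : ℕ, Real.exp (-(t * p l)) * (t * p l)^s ≤ C (K l) + D (K l) := by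
    intro l
    have hpl := hp l
    by_cases hkj : K l ≤ j
    · have hCv : C (K l) = (2:ℝ)^s * 2^((j - K l)*s) * Real.exp (-((2:ℝ)^(j - K l)/2)) := by
        rw [hC]; exact if_pos hkj
      have hDv : D (K l) = 0 := by rw [hD]; exact if_pos hkj
      rw [hCv, hDv, add_zero]
      have hsplit : (2:ℝ)^j = 2^(j - K l) * 2^(K l) := by
        rw [← pow_add]; congr 1; omega
      have hlow : (2:ℝ)^(j - K l)/2 ≤ t * p l := by
        have e : (2:ℝ)^j * (1/2^(K l + 1)) = 2^(j - K l)/2 := by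
          rw [hsplit, pow_succ]
          have : ((2:ℝ)^(K l)) ≠ 0 := by positivity
          field_simp
        calc (2:ℝ)^(j - K l)/2 = 2^j * (1/2^(K l + 1)) := e.symm
          _ ≤ t * p l :=
            mul_le_mul ht1 (hK1 l).le (by positivity) ht0.le
      have hhigh : t * p l ≤ 2 * 2^(j - K l) := by
        have e : (2:ℝ)^(j+1) * (1/2^(K l)) = 2 * 2^(j - K l) := by
          rw [pow_succ, hsplit]
          have : ((2:ℝ)^(K l)) ≠ 0 := by positivity
          field_simp
        calc t * p l ≤ 2^(j+1) * (1/2^(K l)) :=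
            mul_le_mul ht2.le (hK2 l) (hp l).le (by positivity)
          _ = 2 * 2^(j - K l) := e
      calc Real.exp (-(t * p l)) * (t * p l)^s
          ≤ Real.exp (-((2:ℝ)^(j - K l)/2)) * (2 * 2^(j - K l))^s := by
            apply mul_le_mul
            · exact Real.exp_le_exp.mpr (by linarith)
            · exact pow_le_pow_left₀ (by positivity) hhigh s
            · positivity
            · positivity
        _ = (2:ℝ)^s * 2^((j - K l)*s) * Real.exp (-((2:ℝ)^(j - K l)/2)) := by
            rw [mul_pow, pow_mul]; ring
    · have hCv : C (K l) = 0 := by rw [hC]; exact if_neg hkj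
      have hDv : D (K l) = (1/2:ℝ)^(K l - (j+1)) := by rw [hD]; exact if_neg hkj
      rw [hCv, hDv, zero_add]
      have hsplit : (2:ℝ)^(K l) = 2^(K l - (j+1)) * 2^(j+1) := by
        rw [← pow_add]; congr 1; omega
      have hub : t * p l ≤ (1/2:ℝ)^(K l - (j+1)) := by
        have e : (2:ℝ)^(j+1) * (1/2^(K l)) = (1/2:ℝ)^(K l - (j+1)) := by
          rw [div_pow, one_pow, hsplit]
          have h1 : ((2:ℝ)^(K l - (j+1))) ≠ 0 := by positivity
          have h2 : ((2:ℝ)^(j+1)) ≠ 0 := by positivity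
          field_simp
        calc t * p l ≤ 2^(j+1) * (1/2^(K l)) :=
            mul_le_mul ht2.le (hK2 l) (hp l).le (by positivity)
          _ = (1/2:ℝ)^(K l - (j+1)) := e
      have hle1 : t * p l ≤ 1 :=
        le_trans hub (pow_le_one₀ (by norm_num) (by norm_num))
      calc Real.exp (-(t * p l)) * (t * p l)^s ≤ t * p l :=
            aux_exp_pow_le (by positivity) hle1 hs
        _ ≤ (1/2:ℝ)^(K l - (j+1)) := hub
  -- tsum of C
  have hCvanish : ∀ k ∉ Finset.range (j+1), C k = 0 := by
    intro k hk
    rw [hC]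
    exact if_neg (by simp at hk; omega)
  have hCsum : Summable C := summable_of_ne_finset_zero hCvanish
  have hCts : ∑' k, C k ≤ 2^s * S := by
    rw [tsum_eq_sum hCvanish]
    have e : ∑ k ∈ Finset.range (j+1), C k
        = 2^s * ∑ k ∈ Finset.range (j+1),
          (2:ℝ)^((j-k)*s) * Real.exp (-((2:ℝ)^(j-k)/2)) := by
      rw [Finset.mul_sum]
      apply Finset.sum_congr rfl
      intro k hk
      simp only [Finset.mem_range] at hk
      simp only [hC]
      rw [if_pos (show k ≤ j by omega)]
      ring
    rw [e]
    have e2 : ∑ k ∈ Finset.range (j+1),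
        (2:ℝ)^((j-k)*s) * Real.exp (-((2:ℝ)^(j-k)/2))
        = ∑ k ∈ Finset.range (j+1),
          (2:ℝ)^(k*s) * Real.exp (-((2:ℝ)^k/2)) := by
      have e2' := Finset.sum_range_reflect
        (fun k => (2:ℝ)^(k*s) * Real.exp (-((2:ℝ)^k/2))) (j+1)
      simp only [Nat.add_sub_cancel] at e2'
      exact e2'
    rw [e2]
    apply mul_le_mul_of_nonneg_left _ (by positivity)
    exact Summable.sum_le_tsum _ (fun k _ => by positivity) (summable_g s)
  -- tsum of D
  have hDhas : HasSum D 2 := by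
    have hinj : Function.Injective (fun i : ℕ => i + (j+1)) := add_left_injective (j+1)
    have hrange : ∀ y ∉ Set.range (fun i : ℕ => i + (j+1)), D y = 0 := by
      intro y hy
      have hyj : y ≤ j := by
        by_contra h
        exact hy ⟨y - (j+1), by dsimp only; omega⟩
      rw [hD]; exact if_pos hyj
    rw [← hinj.hasSum_iff hrange]
    have e : (D ∘ fun i : ℕ => i + (j+1)) = fun i : ℕ => (1/2:ℝ)^i := by
      funext i
      simp only [Function.comp_apply, hD]
      rw [if_neg (by omega)]
      congr 1
      omega
    rw [e]
    have := hasSum_geometric_of_lt_one (show (0:ℝ) ≤ 1/2 by norm_num)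
      (show (1/2:ℝ) < 1 by norm_num)
    convert this using 1
    norm_num
  have hDsum : Summable D := hDhas.summable
  have hDts : ∑' k, D k = 2 := hDhas.tsum_eq
  -- finite sums bound
  have hFsum : ∀ F : Finset ℕ,
      ∑ l ∈ F, Real.exp (-(t * p l)) * (t * p l)^s ≤ mstar * (2 + 2^s * S) := by
    intro F
    have step1 : ∑ l ∈ F, Real.exp (-(t * p l)) * (t * p l)^s
        ≤ ∑ l ∈ F, (C (K l) + D (K l)) :=
      Finset.sum_le_sum fun l _ => hpt l
    have step2 : ∑ l ∈ F, (C (K l) + D (K l)) =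
        ∑ k ∈ F.image K, ((F.filter (fun l => K l = k)).card : ℝ) * (C k + D k) := by
      rw [← Finset.sum_fiberwise_of_maps_to (g := K)
        (fun l hl => Finset.mem_image_of_mem K hl) (fun l => C (K l) + D (K l))]
      apply Finset.sum_congr rfl
      intro k _
      rw [Finset.sum_congr rfl (fun l hl => by
        rw [(Finset.mem_filter.mp hl).2]), Finset.sum_const, nsmul_eq_mul]
    have step3 : ∑ k ∈ F.image K, ((F.filter (fun l => K l = k)).card : ℝ) * (C k + D k)
        ≤ ∑ k ∈ F.image K, (mstar : ℝ) * (C k + D k) :=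
      Finset.sum_le_sum fun k _ =>
        mul_le_mul_of_nonneg_right (hfib F k) (add_nonneg (hC0 k) (hD0 k))
    have step4 : ∑ k ∈ F.image K, (mstar : ℝ) * (C k + D k)
        = mstar * ∑ k ∈ F.image K, (C k + D k) := (Finset.mul_sum _ _ _).symm
    have step5 : ∑ k ∈ F.image K, (C k + D k) ≤ ∑' k, (C k + D k) :=
      Summable.sum_le_tsum _ (fun k _ => add_nonneg (hC0 k) (hD0 k)) (hCsum.add hDsum)
    have step6 : ∑' k, (C k + D k) = (∑' k, C k) + ∑' k, D k := Summable.tsum_add hCsum hDsum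
    have step7 : (∑' k, C k) + ∑' k, D k ≤ 2 + 2^s * S := by
      rw [hDts]; linarith [hCts]
    calc ∑ l ∈ F, Real.exp (-(t * p l)) * (t * p l)^s
        ≤ ∑ k ∈ F.image K, ((F.filter (fun l => K l = k)).card : ℝ) * (C k + D k) := by
          rw [← step2]; exact step1
      _ ≤ mstar * ∑ k ∈ F.image K, (C k + D k) := by rw [← step4]; exact step3
      _ ≤ mstar * (2 + 2^s * S) := by
          apply mul_le_mul_of_nonneg_left _ (Nat.cast_nonneg mstar)
          calc ∑ k ∈ F.image K, (C k + D k) ≤ ∑' k, (C k + D k) := step5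
            _ = (∑' k, C k) + ∑' k, D k := step6
            _ ≤ 2 + 2^s * S := step7
  -- conclude
  have hPhi : (s.factorial : ℝ) * Phi p s t
      = ∑' l, Real.exp (-(t * p l)) * (t * p l)^s := by
    unfold Phi
    rw [tsum_div_const]
    have hfz : ((s.factorial : ℝ)) ≠ 0 := by
      exact_mod_cast s.factorial_ne_zero
    rw [mul_comm, div_mul_cancel₀ _ hfz]
  rw [hPhi]
  exact tsum_le_of_sum_le'
    (mul_nonneg (Nat.cast_nonneg mstar) (by positivity)) hFsum

theorem stmt_11 (p : ℕ → ℝ) (hp : ∀ j, 0 < p j) (hdec : ∀ j, p (j + 1) ≤ p j)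
    (hsum : ∑' j : ℕ, p j = 1)
    (mstar : ℕ) (hm : ∀ j, dyadicCount p j ≤ mstar) :
    (∀ s : ℕ, 1 ≤ s → ∀ j : ℕ, ∀ t : ℝ,
      (2 : ℝ) ^ j ≤ t → t < (2 : ℝ) ^ (j + 1) →
      (s.factorial : ℝ) * Phi p s t ≤
        (mstar : ℝ) * (2 + 2 ^ s * ∑' l : ℕ, (2 : ℝ) ^ (l * s) *
          Real.exp (-((2 : ℝ) ^ l / 2)))) ∧
    (∀ s : ℕ, 1 ≤ s → ∃ M : ℝ, ∀ t : ℝ, 0 < t → Phi p s t ≤ M) := by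
  constructor
  · intro s hs j t ht1 ht2
    exact core p hp hsum mstar hm s hs j t ht1 ht2
  · intro s hs
    set S : ℝ := ∑' l : ℕ, (2 : ℝ) ^ (l * s) * Real.exp (-((2 : ℝ) ^ l / 2)) with hS
    have hS0 : 0 ≤ S := tsum_nonneg fun l => by positivity
    have hps : Summable p := by
      by_contra h
      rw [tsum_eq_zero_of_not_summable h] at hsum
      norm_num at hsum
    have hple : ∀ l, p l ≤ 1 := by
      intro l
      rw [← hsum]
      exact Summable.le_tsum hps l fun m _ => (hp m).le
    have hfpos : (0:ℝ) < s.factorial := by exact_mod_cast s.factorial_pos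
    refine ⟨(mstar : ℝ) * (2 + 2^s * S) / s.factorial + 1, ?_⟩
    intro t ht
    have hbnd0 : 0 ≤ (mstar : ℝ) * (2 + 2^s * S) :=
      mul_nonneg (Nat.cast_nonneg mstar) (by positivity)
    by_cases ht1 : 1 ≤ t
    · -- find dyadic j
      have hn1 : 1 ≤ ⌊t⌋₊ := Nat.one_le_floor_iff t |>.mpr ht1
      set n := ⌊t⌋₊ with hn
      set j := Nat.log 2 n with hj
      have h1 : (2:ℝ)^j ≤ t := by
        have : (2:ℕ)^j ≤ n := Nat.pow_log_le_self 2 (by omega)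
        calc (2:ℝ)^j = ((2^j : ℕ) : ℝ) := by push_cast; ring
          _ ≤ (n : ℝ) := by exact_mod_cast this
          _ ≤ t := Nat.floor_le (by linarith)
      have h2 : t < (2:ℝ)^(j+1) := by
        have hlt : n < 2^(j+1) := Nat.lt_pow_succ_log_self (by norm_num) n
        have : (n:ℝ) + 1 ≤ (2:ℝ)^(j+1) := by
          have : n + 1 ≤ 2^(j+1) := by omega
          calc ((n:ℝ) + 1) = ((n+1 : ℕ) : ℝ) := by push_cast; ring
            _ ≤ ((2^(j+1) : ℕ) : ℝ) := by exact_mod_cast this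
            _ = (2:ℝ)^(j+1) := by push_cast; ring
        have := Nat.lt_floor_add_one t
        linarith
      have := core p hp hsum mstar hm s hs j t h1 h2
      have hPhile : Phi p s t ≤ (mstar : ℝ) * (2 + 2^s * S) / s.factorial := by
        rw [le_div_iff₀ hfpos]
        linarith [this]
      linarith
    · -- small t
      push_neg at ht1
      have hPhi : Phi p s t
          = (∑' l, Real.exp (-(t * p l)) * (t * p l)^s) / s.factorial := by
        unfold Phi
        rw [tsum_div_const]
      have hles : ∑' l, Real.exp (-(t * p l)) * (t * p l)^s ≤ 1 := by
        apply tsum_le_of_sum_le' (by norm_num)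
        intro F
        have hterm : ∀ l ∈ F, Real.exp (-(t * p l)) * (t * p l)^s ≤ t * p l := by
          intro l _
          apply aux_exp_pow_le (mul_nonneg ht.le (hp l).le) _ hs
          have := hple l
          nlinarith [hp l, (hp l).le]
        calc ∑ l ∈ F, Real.exp (-(t * p l)) * (t * p l)^s
            ≤ ∑ l ∈ F, t * p l := Finset.sum_le_sum hterm
          _ = t * ∑ l ∈ F, p l := (Finset.mul_sum _ _ _).symm
          _ ≤ 1 * 1 := by
            apply mul_le_mul ht1.le _ (Finset.sum_nonneg fun l _ => (hp l).le) (by norm_num)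
            calc ∑ l ∈ F, p l ≤ ∑' l, p l := Summable.sum_le_tsum _ (fun l _ => (hp l).le) hps
              _ = 1 := hsum
          _ = 1 := by norm_num
      have h1s : Phi p s t ≤ 1 / s.factorial := by
        rw [hPhi]
        gcongr
      have h2s : (1:ℝ) / s.factorial ≤ 1 := by
        rw [div_le_one hfpos]
        exact_mod_cast s.factorial_pos
      have h3s : 0 ≤ (mstar : ℝ) * (2 + 2^s * S) / s.factorial :=
        div_nonneg hbnd0 hfpos.le
      linarith
end

section
/- If sup_j m_j = ∞ where m_j = #{l : 2^{-(j+1)} < p_l ≤ 2^{-j}}, then for every j₀ there exists j ≥ j₀ such that m_k ≤ m_j for all 0 ≤ k ≤ j and m_k ≤ 3^{k-j} m_j for all k ≥ j. -/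
theorem stmt_12 (m : ℕ → ℕ)
    (hsum : ∀ n : ℕ, ∑ j ∈ Finset.range n, (m j : ℝ) / 2 ^ (j + 1) ≤ 1)
    (hsup : ∀ N : ℕ, ∃ j : ℕ, N ≤ m j) :
    ∀ j₀ : ℕ, ∃ j : ℕ, j₀ ≤ j ∧
      (∀ k : ℕ, k ≤ j → m k ≤ m j) ∧
      (∀ k : ℕ, j ≤ k → (m k : ℝ) ≤ 3 ^ (k - j) * m j) := by
  have hpos : ∀ k : ℕ, (0:ℝ) < 2 ^ (k+1) := fun k => by positivity
  -- pointwise bound m k ≤ 2^(k+1)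
  have hbN : ∀ k : ℕ, m k ≤ 2 ^ (k+1) := by
    intro k
    have h1 : (m k : ℝ) / 2 ^ (k+1) ≤ 1 := by
      have := Finset.single_le_sum (f := fun j => (m j : ℝ) / 2 ^ (j+1))
        (fun i _ => by positivity) (Finset.self_mem_range_succ k)
      exact this.trans (hsum (k+1))
    rw [div_le_one (hpos k)] at h1
    exact_mod_cast h1
  -- the weights tend to 0
  set g : ℕ → ℝ := fun k => (m k : ℝ) / 2 ^ (k+1) with hg
  have hsummable : Summable g :=
    summable_of_sum_range_le (fun n => by positivity) hsum
  have htend : Filter.Tendsto g Filter.atTop (nhds 0) :=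
    hsummable.tendsto_atTop_zero
  intro j₀
  set C : ℕ := (Finset.range j₀).sup m + 1 with hC
  have hmk_lt : ∀ k, k < j₀ → m k < C := fun k hk =>
    Nat.lt_succ_of_le (Finset.le_sup (Finset.mem_range.mpr hk))
  obtain ⟨n₀, hn₀⟩ := hsup (C + 2 ^ j₀ + 1)
  have hn₀j₀ : j₀ ≤ n₀ := by
    by_contra h
    push_neg at h
    have h1 : m n₀ ≤ 2 ^ (n₀+1) := hbN n₀
    have h2 : (2:ℕ) ^ (n₀+1) ≤ 2 ^ j₀ := Nat.pow_le_pow_right (by norm_num) (by omega)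
    omega
  have hgn₀ : 0 < g n₀ := by
    have : (0:ℝ) < (m n₀ : ℝ) := by
      have : 0 < m n₀ := lt_of_lt_of_le (Nat.succ_pos (C + 2 ^ j₀)) hn₀
      exact_mod_cast this
    exact div_pos this (hpos n₀)
  obtain ⟨K, hK⟩ := Filter.eventually_atTop.mp (htend.eventually (gt_mem_nhds hgn₀))
  set F : Finset ℕ := (Finset.range (K + n₀ + 1)).filter (fun k => j₀ ≤ k ∧ C ≤ m k)
    with hF
  have hn₀F : n₀ ∈ F := by
    simp only [hF, Finset.mem_filter, Finset.mem_range]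
    refine ⟨by omega, hn₀j₀, ?_⟩
    calc C ≤ C + (2 ^ j₀ + 1) := Nat.le_add_right _ _
    _ = C + 2 ^ j₀ + 1 := by ring
    _ ≤ m n₀ := hn₀
  obtain ⟨j, hjF, hjmax⟩ := F.exists_max_image g ⟨n₀, hn₀F⟩
  have hjprop : j₀ ≤ j ∧ C ≤ m j := by
    have := hjF
    simp only [hF, Finset.mem_filter, Finset.mem_range] at this
    exact this.2
  -- every index in S is dominated in g by j
  have hS : ∀ k, j₀ ≤ k → C ≤ m k → g k ≤ g j := by
    intro k hk1 hk2
    by_cases hkK : k < K + n₀ + 1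
    · exact hjmax k (by simp only [hF, Finset.mem_filter, Finset.mem_range]; exact ⟨hkK, hk1, hk2⟩)
    · have : g k < g n₀ := hK k (by omega)
      exact le_of_lt (this.trans_le (hjmax n₀ hn₀F))
  refine ⟨j, hjprop.1, ?_, ?_⟩
  · -- k ≤ j ⇒ m k ≤ m j
    intro k hk
    by_cases h1 : m k < C
    · omega
    · push_neg at h1
      have hk0 : j₀ ≤ k := by
        by_contra h
        push_neg at h
        exact absurd (hmk_lt k h) (by omega)
      have hgk : g k ≤ g j := hS k hk0 h1
      rw [hg] at hgk
      simp only [div_le_div_iff₀ (hpos k) (hpos j)] at hgk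
      have h2 : (2:ℝ) ^ (k+1) ≤ 2 ^ (j+1) :=
        pow_le_pow_right₀ (by norm_num) (by omega)
      have hmj : (0:ℝ) ≤ (m j : ℝ) := Nat.cast_nonneg _
      have hle : (m k : ℝ) * 2 ^ (j+1) ≤ (m j : ℝ) * 2 ^ (j+1) := by nlinarith
      have : (m k : ℝ) ≤ (m j : ℝ) := by nlinarith [hpos j]
      exact_mod_cast this
  · -- j ≤ k ⇒ m k ≤ 3^(k-j) * m j
    intro k hk
    have h3 : (1:ℝ) ≤ 3 ^ (k-j) := one_le_pow₀ (by norm_num)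
    have hmjC : (C : ℝ) ≤ (m j : ℝ) := by exact_mod_cast hjprop.2
    by_cases h1 : m k < C
    · have : (m k : ℝ) < (m j : ℝ) := by
        have : m k < m j := by omega
        exact_mod_cast this
      nlinarith
    · push_neg at h1
      have hgk : g k ≤ g j := hS k (le_trans hjprop.1 hk) h1
      rw [hg] at hgk
      simp only [div_le_div_iff₀ (hpos k) (hpos j)] at hgk
      -- 2^(k+1) = 2^(j+1) * 2^(k-j)
      have hsplit : (2:ℝ) ^ (k+1) = 2 ^ (j+1) * 2 ^ (k-j) := by
        rw [← pow_add]
        congr 1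
        omega
      rw [hsplit] at hgk
      have h2 : (2:ℝ) ^ (k-j) ≤ 3 ^ (k-j) := pow_le_pow_left₀ (by norm_num) (by norm_num) _
      have hmj : (0:ℝ) ≤ (m j : ℝ) := Nat.cast_nonneg _
      have hint : (m j : ℝ) * 2 ^ (j+1) * 2 ^ (k-j) ≤ (m j : ℝ) * 2 ^ (j+1) * 3 ^ (k-j) :=
        mul_le_mul_of_nonneg_left h2 (mul_nonneg hmj (le_of_lt (hpos j)))
      have hkey : (m k : ℝ) * 2 ^ (j+1) ≤ (m j : ℝ) * 3 ^ (k-j) * 2 ^ (j+1) := by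
        nlinarith [hgk, hint]
      nlinarith [hpos j, hkey]
end

section
/- Define ρ_{j,r} = p_j^{-r} ∑_{i>j} p_i^r. Then for p_{j+1} ≤ x < p_j (with ν_r[0,x] = ∑_{i : p_i ≤ x} p_i^r): ρ_{j,r} = ν_r[0,p_{j+1}]/p_j^r < ν_r[0,x]/x^r ≤ 1 + ρ_{j+1,r}. Consequently liminf_{j→∞} ρ_{j,r} ≤ liminf_{t→∞} Φ_r(t) ≤ limsup_{t→∞} Φ_r(t) ≤ 1 + limsup_{j→∞} ρ_{j,r}. -/
/-- `ν_r[0,x] = ∑_{i : p_i ≤ x} p_i^r`. -/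
noncomputable def nuMass (p : ℕ → ℝ) (r : ℕ) (x : ℝ) : ℝ :=
  ∑' i : ℕ, if p i ≤ x then p i ^ r else 0

/-- `ρ_{j,r} = p_j^{-r} ∑_{i > j} p_i^r`. -/
noncomputable def rho (p : ℕ → ℝ) (r j : ℕ) : ℝ :=
  (∑' i : ℕ, if j < i then p i ^ r else 0) / p j ^ r

open Filter MeasureTheory Set Real

section
variable {p : ℕ → ℝ} {r : ℕ}

lemma summable_p (hp : ∀ j, 0 < p j) (hsum : ∑' j : ℕ, p j = 1) : Summable p := by
  by_contra h
  rw [tsum_eq_zero_of_not_summable h] at hsum; norm_num at hsum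

lemma p_le_one (hp : ∀ j, 0 < p j) (hsum : ∑' j : ℕ, p j = 1) (j : ℕ) : p j ≤ 1 := by
  rw [← hsum]
  exact Summable.le_tsum (summable_p hp hsum) j (fun i _ => (hp i).le)

lemma summable_pr (hp : ∀ j, 0 < p j) (hsum : ∑' j : ℕ, p j = 1) (hr : 1 ≤ r) :
    Summable (fun i => p i ^ r) :=
  (summable_p hp hsum).of_nonneg_of_le (fun i => pow_nonneg (hp i).le r)
    (fun i => pow_le_of_le_one (hp i).le (p_le_one hp hsum i) (by omega))

lemma summable_ite {s : ℕ → Prop} [DecidablePred s] (hp : ∀ j, 0 < p j)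
    (hsum : ∑' j : ℕ, p j = 1) (hr : 1 ≤ r) :
    Summable (fun i => if s i then p i ^ r else 0) :=
  (summable_pr hp hsum hr).of_nonneg_of_le
    (fun i => by split; exacts [pow_nonneg (hp i).le r, le_rfl])
    (fun i => by split; exacts [le_rfl, pow_nonneg (hp i).le r])

lemma tsum_pr_le_one (hp : ∀ j, 0 < p j) (hsum : ∑' j : ℕ, p j = 1) (hr : 1 ≤ r) :
    ∑' i, p i ^ r ≤ 1 := by
  rw [← hsum]
  exact Summable.tsum_le_tsum (fun i => pow_le_of_le_one (hp i).le (p_le_one hp hsum i) (by omega))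
    (summable_pr hp hsum hr) (summable_p hp hsum)

lemma nuMass_nonneg (hp : ∀ j, 0 < p j) (x : ℝ) : 0 ≤ nuMass p r x :=
  tsum_nonneg (fun i => by split; exacts [pow_nonneg (hp i).le r, le_rfl])

lemma nuMass_le_one (hp : ∀ j, 0 < p j) (hsum : ∑' j : ℕ, p j = 1) (hr : 1 ≤ r) (x : ℝ) :
    nuMass p r x ≤ 1 := by
  refine le_trans ?_ (tsum_pr_le_one hp hsum hr)
  exact Summable.tsum_le_tsum (fun i => by split; exacts [le_rfl, pow_nonneg (hp i).le r])
    (summable_ite hp hsum hr) (summable_pr hp hsum hr)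

lemma nuMass_mono (hp : ∀ j, 0 < p j) (hsum : ∑' j : ℕ, p j = 1) (hr : 1 ≤ r) :
    Monotone (fun x => nuMass p r x) := by
  intro x y hxy
  exact Summable.tsum_le_tsum (fun i => by
      by_cases h : p i ≤ x
      · rw [if_pos h, if_pos (h.trans hxy)]
      · rw [if_neg h]
        split; exacts [pow_nonneg (hp i).le r, le_rfl])
    (summable_ite hp hsum hr) (summable_ite hp hsum hr)

lemma part1 (hp : ∀ j, 0 < p j) (hdec : ∀ j, p (j + 1) ≤ p j) (hsum : ∑' j : ℕ, p j = 1)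
    (hr : 1 ≤ r) (j : ℕ) (x : ℝ) (h1 : p (j + 1) ≤ x) (h2 : x < p j) :
    rho p r j = nuMass p r (p (j + 1)) / p j ^ r ∧
      nuMass p r (p (j + 1)) / p j ^ r < nuMass p r x / x ^ r ∧
      nuMass p r x / x ^ r ≤ 1 + rho p r (j + 1) := by
  have anti : Antitone p := antitone_nat_of_succ_le hdec
  have hx0 : 0 < x := lt_of_lt_of_le (hp (j + 1)) h1
  have hiffx : ∀ i, (p i ≤ x) ↔ j < i := by
    intro i
    constructor
    · intro h
      by_contra hc
      push_neg at hc
      exact absurd (le_trans (anti hc) h) (not_le.2 h2)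
    · intro h
      exact le_trans (anti h) h1
  have hiffp : ∀ i, (p i ≤ p (j + 1)) ↔ j < i := by
    intro i
    constructor
    · intro h
      by_contra hc
      push_neg at hc
      exact absurd (le_trans (anti hc) (le_trans h h1)) (not_le.2 h2)
    · intro h
      exact anti h
  have hnx : nuMass p r x = ∑' i : ℕ, if j < i then p i ^ r else 0 :=
    tsum_congr fun i => if_congr (hiffx i) rfl rfl
  have hnp : nuMass p r (p (j + 1)) = ∑' i : ℕ, if j < i then p i ^ r else 0 :=
    tsum_congr fun i => if_congr (hiffp i) rfl rfl
  set S : ℝ := ∑' i : ℕ, if j < i then p i ^ r else 0 with hS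
  set T : ℝ := ∑' i : ℕ, if j + 1 < i then p i ^ r else 0 with hT
  have hSpos : 0 < S := by
    have hle : p (j + 1) ^ r ≤ S := by
      have := Summable.le_tsum (summable_ite (s := fun i => j < i) hp hsum hr) (j + 1)
        (fun i _ => by split; exacts [pow_nonneg (hp i).le r, le_rfl])
      simpa using this
    exact lt_of_lt_of_le (pow_pos (hp (j + 1)) r) hle
  have hsplit : S = p (j + 1) ^ r + T := by
    have hterm : ∀ i : ℕ, (if j < i then p i ^ r else 0) =
        (if i = j + 1 then p (j + 1) ^ r else 0) + (if j + 1 < i then p i ^ r else 0) := by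
      intro i
      rcases lt_trichotomy i (j + 1) with h | h | h
      · rw [if_neg (by omega), if_neg (by omega), if_neg (by omega)]; ring
      · subst h; rw [if_pos (by omega), if_pos rfl, if_neg (by omega)]; ring
      · rw [if_pos (by omega), if_neg (by omega), if_pos h]; ring
    rw [hS, tsum_congr hterm, Summable.tsum_add ?_ (summable_ite hp hsum hr), tsum_ite_eq]
    exact (hasSum_ite_eq (j + 1) (p (j + 1) ^ r)).summable
  have hTnn : 0 ≤ T :=
    tsum_nonneg (fun i => by split; exacts [pow_nonneg (hp i).le r, le_rfl])
  have hxr : (0:ℝ) < x ^ r := pow_pos hx0 r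
  have hpj1r : (0:ℝ) < p (j + 1) ^ r := pow_pos (hp (j + 1)) r
  refine ⟨by rw [rho, hnp], ?_, ?_⟩
  · rw [hnp, hnx]
    exact div_lt_div_of_pos_left hSpos hxr (pow_lt_pow_left₀ h2 hx0.le (by omega))
  · rw [hnx]
    have h3 : S / x ^ r ≤ S / p (j + 1) ^ r :=
      div_le_div_of_nonneg_left hSpos.le hpj1r (pow_le_pow_left₀ (hp (j + 1)).le h1 r)
    refine h3.trans ?_
    rw [rho, ← hT, hsplit, add_div, div_self hpj1r.ne']

lemma exists_index (hp : ∀ j, 0 < p j) (hdec : ∀ j, p (j + 1) ≤ p j)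
    (hsum : ∑' j : ℕ, p j = 1) (J : ℕ) {x : ℝ} (hx0 : 0 < x) (hxJ : x < p J) :
    ∃ j, J ≤ j ∧ p (j + 1) ≤ x ∧ x < p j := by
  have anti : Antitone p := antitone_nat_of_succ_le hdec
  have htend : Tendsto p atTop (nhds 0) := (summable_p hp hsum).tendsto_atTop_zero
  have hex : ∃ k, p k ≤ x := by
    have := (htend.eventually (eventually_lt_nhds hx0)).exists
    obtain ⟨k, hk⟩ := this
    exact ⟨k, hk.le⟩
  classical
  set k := Nat.find hex with hk
  have hkx : p k ≤ x := Nat.find_spec hex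
  have hJk : J < k := by
    rcases lt_or_ge J k with h | h
    · exact h
    · exact absurd (le_trans (anti h) hkx) (not_le.2 hxJ)
  refine ⟨k - 1, by omega, ?_, ?_⟩
  · have : k - 1 + 1 = k := by omega
    rw [this]; exact hkx
  · have := Nat.find_min hex (m := k - 1) (by omega)
    push_neg at this
    exact this

lemma nu_upper (hp : ∀ j, 0 < p j) (hdec : ∀ j, p (j + 1) ≤ p j) (hsum : ∑' j : ℕ, p j = 1)
    (hr : 1 ≤ r) {z : ℝ} (J : ℕ) (hz : ∀ j, J ≤ j → rho p r j ≤ z) :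
    ∀ x : ℝ, 0 < x → x < p J → nuMass p r x ≤ (1 + z) * x ^ r := by
  intro x hx0 hxJ
  obtain ⟨j, hJj, h1, h2⟩ := exists_index hp hdec hsum J hx0 hxJ
  have h3 := (part1 hp hdec hsum hr j x h1 h2).2.2
  have h4 : nuMass p r x / x ^ r ≤ 1 + z :=
    h3.trans (by linarith [hz (j + 1) (by omega)])
  calc nuMass p r x = nuMass p r x / x ^ r * x ^ r := by
        field_simp
    _ ≤ (1 + z) * x ^ r := by
        exact mul_le_mul_of_nonneg_right h4 (pow_nonneg hx0.le r)

lemma nu_lower (hp : ∀ j, 0 < p j) (hdec : ∀ j, p (j + 1) ≤ p j) (hsum : ∑' j : ℕ, p j = 1)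
    (hr : 1 ≤ r) {c : ℝ} (J : ℕ) (hc : ∀ j, J ≤ j → c ≤ rho p r j) :
    ∀ x : ℝ, 0 < x → x < p J → c * x ^ r ≤ nuMass p r x := by
  intro x hx0 hxJ
  obtain ⟨j, hJj, h1, h2⟩ := exists_index hp hdec hsum J hx0 hxJ
  obtain ⟨e1, e2, -⟩ := part1 hp hdec hsum hr j x h1 h2
  have h4 : c ≤ nuMass p r x / x ^ r := (hc j hJj).trans (by rw [e1]; exact e2.le)
  calc c * x ^ r ≤ nuMass p r x / x ^ r * x ^ r :=
        mul_le_mul_of_nonneg_right h4 (pow_nonneg hx0.le r)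
    _ = nuMass p r x := by field_simp

lemma integral_exp_tail {t : ℝ} (a : ℝ) (ht : 0 < t) :
    ∫ s in Ioi a, Real.exp (-(t * s)) = Real.exp (-(t * a)) / t := by
  have h := integral_comp_mul_left_Ioi (fun u => Real.exp (-u)) a ht
  simp only [smul_eq_mul] at h
  rw [h, integral_exp_neg_Ioi]
  rw [div_eq_inv_mul]

lemma integral_exp_pow {t : ℝ} (ht : 0 < t) (n : ℕ) :
    ∫ s in Ioi (0:ℝ), Real.exp (-(t * s)) * s ^ n = n.factorial / t ^ (n + 1) := by
  have h := Real.integral_rpow_mul_exp_neg_mul_Ioi (a := (n:ℝ) + 1) (r := t)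
    (by positivity) ht
  have hcongr : ∫ s in Ioi (0:ℝ), s ^ ((n:ℝ) + 1 - 1) * Real.exp (-(t * s)) =
      ∫ s in Ioi (0:ℝ), Real.exp (-(t * s)) * s ^ n := by
    refine setIntegral_congr_fun measurableSet_Ioi fun s hs => ?_
    rw [show (n:ℝ) + 1 - 1 = (n:ℝ) by ring, Real.rpow_natCast, mul_comm]
  rw [hcongr] at h
  rw [h, show ((n:ℝ) + 1) = ((n + 1 : ℕ) : ℝ) by push_cast; ring, Real.rpow_natCast,
    Nat.cast_add, Nat.cast_one, Real.Gamma_nat_eq_factorial, div_pow, one_pow]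
  ring

lemma tendsto_pow_mul_exp {b : ℝ} (hb : 0 < b) (n : ℕ) :
    Tendsto (fun x : ℝ => x ^ n * Real.exp (-(b * x))) atTop (nhds 0) := by
  have h1 : Tendsto (fun x : ℝ => (b * x) ^ n * Real.exp (-(b * x))) atTop (nhds 0) := by
    have := (tendsto_pow_mul_exp_neg_atTop_nhds_zero n).comp
      (tendsto_id.const_mul_atTop hb)
    exact this
  have h2 := h1.const_mul ((b⁻¹) ^ n)
  rw [mul_zero] at h2
  refine h2.congr fun x => ?_
  rw [← mul_assoc, ← mul_pow, ← mul_assoc, inv_mul_cancel₀ hb.ne', one_mul]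

lemma integrableOn_exp_pow {t : ℝ} (ht : 0 < t) (n : ℕ) :
    IntegrableOn (fun s : ℝ => Real.exp (-(t * s)) * s ^ n) (Ioi (0:ℝ)) := by
  refine integrable_of_isBigO_exp_neg (half_pos ht) (Continuous.continuousOn (by continuity)) ?_
  have htend : Tendsto (fun x : ℝ => (Real.exp (-(t * x)) * x ^ n) / Real.exp (-(t / 2) * x))
      atTop (nhds 0) := by
    have : ∀ x : ℝ, (Real.exp (-(t * x)) * x ^ n) / Real.exp (-(t / 2) * x)
        = x ^ n * Real.exp (-(t / 2 * x)) := by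
      intro x
      rw [mul_comm (Real.exp _), mul_div_assoc, ← Real.exp_sub]
      ring_nf
    simpa only [this] using tendsto_pow_mul_exp (half_pos ht) n
  exact (Asymptotics.isLittleO_of_tendsto
    (fun x hx => absurd hx (Real.exp_ne_zero _)) htend).isBigO

lemma integrable_g (hp : ∀ j, 0 < p j) (hsum : ∑' j : ℕ, p j = 1) (hr : 1 ≤ r)
    {t : ℝ} (ht : 0 < t) :
    IntegrableOn (fun s : ℝ => Real.exp (-(t * s)) * nuMass p r s) (Ioi (0:ℝ)) := by
  have hmeas : Measurable (fun s : ℝ => nuMass p r s) := (nuMass_mono hp hsum hr).measurable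
  have hexp : IntegrableOn (fun s : ℝ => Real.exp (-(t * s))) (Ioi (0:ℝ)) := by
    simpa [neg_mul] using exp_neg_integrableOn_Ioi 0 ht
  refine Integrable.mono' hexp ?_ ?_
  · exact ((Real.measurable_exp.comp (measurable_id.const_mul t).neg).mul hmeas).aestronglyMeasurable
  · refine Filter.Eventually.of_forall fun s => ?_
    rw [Real.norm_of_nonneg (mul_nonneg (Real.exp_pos _).le (nuMass_nonneg hp _))]
    nth_rewrite 2 [show Real.exp (-(t * s)) = Real.exp (-(t * s)) * 1 by ring]
    exact mul_le_mul_of_nonneg_left (nuMass_le_one hp hsum hr s) (Real.exp_pos _).le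

lemma phi_rep (hp : ∀ j, 0 < p j) (hsum : ∑' j : ℕ, p j = 1) (hr : 1 ≤ r)
    {t : ℝ} (ht : 0 < t) :
    Phi p r t = t ^ (r + 1) / r.factorial *
      ∫ s in Ioi (0:ℝ), Real.exp (-(t * s)) * nuMass p r s := by
  set A : ℝ := ∑' j : ℕ, Real.exp (-(t * p j)) * p j ^ r with hA
  have step1 : Phi p r t = t ^ r / r.factorial * A := by
    rw [Phi, hA, ← tsum_mul_left]
    refine tsum_congr fun j => ?_
    rw [mul_pow]; ring
  set F : ℕ → ℝ → ℝ := fun i s => (Ici (p i)).indicator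
    (fun s => Real.exp (-(t * s)) * p i ^ r) s with hF
  have h1 : ∀ s : ℝ, Real.exp (-(t * s)) * nuMass p r s = ∑' i, F i s := by
    intro s
    rw [nuMass, ← tsum_mul_left]
    refine tsum_congr fun i => ?_
    rw [hF]
    simp only [indicator, mem_Ici]
    by_cases h : p i ≤ s
    · rw [if_pos h, if_pos h]
    · rw [if_neg h, if_neg h, mul_zero]
  have hFint : ∀ i, Integrable (F i) (volume.restrict (Ioi (0:ℝ))) := by
    intro i
    refine Integrable.indicator ?_ measurableSet_Ici
    have hexp : IntegrableOn (fun s : ℝ => Real.exp (-(t * s))) (Ioi (0:ℝ)) := by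
      simpa [neg_mul] using exp_neg_integrableOn_Ioi 0 ht
    exact hexp.mul_const _
  have hFval : ∀ i, ∫ s in Ioi (0:ℝ), F i s = Real.exp (-(t * p i)) * p i ^ r / t := by
    intro i
    rw [hF]
    rw [MeasureTheory.setIntegral_indicator measurableSet_Ici]
    rw [show Ioi (0:ℝ) ∩ Ici (p i) = Ici (p i) from
      inter_eq_self_of_subset_right (fun s hs => lt_of_lt_of_le (hp i) hs)]
    rw [MeasureTheory.integral_Ici_eq_integral_Ioi, MeasureTheory.integral_mul_const,
      integral_exp_tail (p i) ht]
    ring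
  have hFnonneg : ∀ i s, 0 ≤ F i s := by
    intro i s
    rw [hF]
    exact Set.indicator_nonneg (fun s _ => mul_nonneg (Real.exp_pos _).le
      (pow_nonneg (hp i).le r)) s
  have hnorm : Summable fun i => ∫ s in Ioi (0:ℝ), ‖F i s‖ := by
    have heq : ∀ i, (∫ s in Ioi (0:ℝ), ‖F i s‖) = Real.exp (-(t * p i)) * p i ^ r / t := by
      intro i
      rw [← hFval i]
      exact setIntegral_congr_fun measurableSet_Ioi fun s _ =>
        Real.norm_of_nonneg (hFnonneg i s)
    rw [funext heq]
    refine Summable.of_nonneg_of_le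
      (fun i => by have := pow_nonneg (hp i).le r; positivity) (fun i => ?_)
      ((summable_pr hp hsum hr).mul_right t⁻¹)
    rw [div_eq_mul_inv]
    refine mul_le_mul_of_nonneg_right ?_ (by positivity)
    nth_rewrite 2 [show p i ^ r = 1 * p i ^ r by ring]
    exact mul_le_mul_of_nonneg_right
      (Real.exp_le_one_iff.2 (neg_nonpos.2 (mul_nonneg ht.le (hp i).le)))
      (pow_nonneg (hp i).le r)
  have hswap := MeasureTheory.integral_tsum_of_summable_integral_norm hFint hnorm
  have step2 : ∫ s in Ioi (0:ℝ), Real.exp (-(t * s)) * nuMass p r s = A / t := by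
    rw [show (fun s => Real.exp (-(t * s)) * nuMass p r s) = fun s => ∑' i, F i s from
      funext h1]
    rw [← hswap, funext hFval, hA]
    rw [tsum_div_const]
  rw [step1, step2]
  field_simp
  ring

lemma split_integral {δ' : ℝ} (hδ' : 0 < δ') {f : ℝ → ℝ}
    (hf : IntegrableOn f (Ioi (0:ℝ))) :
    ∫ s in Ioi (0:ℝ), f s = (∫ s in Ioc (0:ℝ) δ', f s) + ∫ s in Ioi δ', f s := by
  rw [← Ioc_union_Ioi_eq_Ioi hδ'.le]
  rw [setIntegral_union (Ioc_disjoint_Ioi le_rfl) measurableSet_Ioi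
    (hf.mono_set (by rw [← Ioc_union_Ioi_eq_Ioi hδ'.le]; exact subset_union_left))
    (hf.mono_set (by rw [← Ioc_union_Ioi_eq_Ioi hδ'.le]; exact subset_union_right))]

lemma phi_upper (hp : ∀ j, 0 < p j) (hsum : ∑' j : ℕ, p j = 1) (hr : 1 ≤ r)
    {C δ : ℝ} (hC : 0 ≤ C) (hδ : 0 < δ)
    (hν : ∀ x : ℝ, 0 < x → x < δ → nuMass p r x ≤ C * x ^ r) :
    ∀ t : ℝ, 0 < t → Phi p r t ≤ C + t ^ r * Real.exp (-(t * (δ / 2))) / r.factorial := by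
  intro t ht
  set δ' : ℝ := δ / 2 with hδ'def
  have hδ' : 0 < δ' := half_pos hδ
  set g : ℝ → ℝ := fun s => Real.exp (-(t * s)) * nuMass p r s with hg
  have hgint : IntegrableOn g (Ioi (0:ℝ)) := integrable_g hp hsum hr ht
  have hpowint : IntegrableOn (fun s : ℝ => Real.exp (-(t * s)) * (C * s ^ r)) (Ioi (0:ℝ)) := by
    exact IntegrableOn.congr_fun ((integrableOn_exp_pow ht r).const_mul C)
      (fun s _ => by ring) measurableSet_Ioi
  have hexpint : IntegrableOn (fun s : ℝ => Real.exp (-(t * s))) (Ioi δ') := by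
    simpa [neg_mul] using exp_neg_integrableOn_Ioi δ' ht
  have h1 : (∫ s in Ioc (0:ℝ) δ', g s) ≤
      ∫ s in Ioc (0:ℝ) δ', Real.exp (-(t * s)) * (C * s ^ r) := by
    refine setIntegral_mono_on (hgint.mono_set Ioc_subset_Ioi_self)
      (hpowint.mono_set Ioc_subset_Ioi_self) measurableSet_Ioc fun s hs => ?_
    exact mul_le_mul_of_nonneg_left
      (hν s hs.1 (lt_of_le_of_lt hs.2 (by rw [hδ'def]; linarith))) (Real.exp_pos _).le
  have hnnae : 0 ≤ᵐ[volume.restrict (Ioi (0:ℝ))] fun s => Real.exp (-(t * s)) * (C * s ^ r) :=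
    (ae_restrict_iff' measurableSet_Ioi).2 (Filter.Eventually.of_forall fun s hs =>
      mul_nonneg (Real.exp_pos _).le (mul_nonneg hC (pow_nonneg (le_of_lt hs) r)))
  have h2 : (∫ s in Ioc (0:ℝ) δ', Real.exp (-(t * s)) * (C * s ^ r)) ≤
      C * (r.factorial / t ^ (r + 1)) := by
    rw [← integral_exp_pow ht r]
    calc (∫ s in Ioc (0:ℝ) δ', Real.exp (-(t * s)) * (C * s ^ r)) ≤
        ∫ s in Ioi (0:ℝ), Real.exp (-(t * s)) * (C * s ^ r) :=
          setIntegral_mono_set hpowint hnnae (HasSubset.Subset.eventuallyLE Ioc_subset_Ioi_self)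
      _ = C * ∫ s in Ioi (0:ℝ), Real.exp (-(t * s)) * s ^ r := by
          rw [← integral_const_mul]
          exact setIntegral_congr_fun measurableSet_Ioi fun s _ => by ring
  have h3 : (∫ s in Ioi δ', g s) ≤ Real.exp (-(t * δ')) / t := by
    rw [← integral_exp_tail δ' ht]
    refine setIntegral_mono_on (hgint.mono_set (Ioi_subset_Ioi hδ'.le)) hexpint
      measurableSet_Ioi fun s hs => ?_
    calc g s = Real.exp (-(t * s)) * nuMass p r s := rfl
      _ ≤ Real.exp (-(t * s)) * 1 :=
          mul_le_mul_of_nonneg_left (nuMass_le_one hp hsum hr s) (Real.exp_pos _).le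
      _ = Real.exp (-(t * s)) := mul_one _
  have hI : (∫ s in Ioi (0:ℝ), g s) ≤ C * (r.factorial / t ^ (r + 1)) +
      Real.exp (-(t * δ')) / t := by
    rw [split_integral hδ' hgint]
    exact add_le_add (h1.trans h2) h3
  rw [phi_rep hp hsum hr ht]
  calc t ^ (r + 1) / r.factorial * ∫ s in Ioi (0:ℝ), g s ≤
      t ^ (r + 1) / r.factorial * (C * (r.factorial / t ^ (r + 1)) + Real.exp (-(t * δ')) / t) :=
        mul_le_mul_of_nonneg_left hI (by positivity)
    _ = C + t ^ r * Real.exp (-(t * δ')) / r.factorial := by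
        have hfac : (0:ℝ) < r.factorial := by exact_mod_cast r.factorial_pos
        field_simp
        ring

lemma phi_lower (hp : ∀ j, 0 < p j) (hsum : ∑' j : ℕ, p j = 1) (hr : 1 ≤ r)
    {c δ : ℝ} (hδ : 0 < δ)
    (hν : ∀ x : ℝ, 0 < x → x < δ → c * x ^ r ≤ nuMass p r x) :
    ∀ t : ℝ, 0 < t →
      c - c * (t ^ (r + 1) / r.factorial * ∫ s in Ioi (δ / 2), Real.exp (-(t * s)) * s ^ r)
        ≤ Phi p r t := by
  intro t ht
  set δ' : ℝ := δ / 2 with hδ'def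
  have hδ' : 0 < δ' := half_pos hδ
  set g : ℝ → ℝ := fun s => Real.exp (-(t * s)) * nuMass p r s with hg
  have hgint : IntegrableOn g (Ioi (0:ℝ)) := integrable_g hp hsum hr ht
  have hpowint : IntegrableOn (fun s : ℝ => Real.exp (-(t * s)) * (c * s ^ r)) (Ioi (0:ℝ)) := by
    exact IntegrableOn.congr_fun ((integrableOn_exp_pow ht r).const_mul c)
      (fun s _ => by ring) measurableSet_Ioi
  have h1 : (∫ s in Ioc (0:ℝ) δ', Real.exp (-(t * s)) * (c * s ^ r)) ≤
      ∫ s in Ioc (0:ℝ) δ', g s := by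
    refine setIntegral_mono_on (hpowint.mono_set Ioc_subset_Ioi_self)
      (hgint.mono_set Ioc_subset_Ioi_self) measurableSet_Ioc fun s hs => ?_
    exact mul_le_mul_of_nonneg_left
      (hν s hs.1 (lt_of_le_of_lt hs.2 (by rw [hδ'def]; linarith))) (Real.exp_pos _).le
  have h0 : 0 ≤ ∫ s in Ioi δ', g s :=
    setIntegral_nonneg measurableSet_Ioi fun s _ =>
      mul_nonneg (Real.exp_pos _).le (nuMass_nonneg hp _)
  have hI : (∫ s in Ioc (0:ℝ) δ', Real.exp (-(t * s)) * (c * s ^ r)) ≤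
      ∫ s in Ioi (0:ℝ), g s := by
    rw [split_integral hδ' hgint]
    linarith
  have hval : (∫ s in Ioc (0:ℝ) δ', Real.exp (-(t * s)) * (c * s ^ r)) =
      c * (r.factorial / t ^ (r + 1)) - c * ∫ s in Ioi δ', Real.exp (-(t * s)) * s ^ r := by
    have e1 : (∫ s in Ioc (0:ℝ) δ', Real.exp (-(t * s)) * (c * s ^ r)) =
        c * ∫ s in Ioc (0:ℝ) δ', Real.exp (-(t * s)) * s ^ r := by
      rw [← integral_const_mul]
      exact setIntegral_congr_fun measurableSet_Ioc fun s _ => by ring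
    have e2 : (∫ s in Ioc (0:ℝ) δ', Real.exp (-(t * s)) * s ^ r) =
        r.factorial / t ^ (r + 1) - ∫ s in Ioi δ', Real.exp (-(t * s)) * s ^ r := by
      have := split_integral hδ' (integrableOn_exp_pow ht r)
      rw [integral_exp_pow ht r] at this
      linarith
    rw [e1, e2]
    ring
  rw [hval] at hI
  rw [phi_rep hp hsum hr ht]
  have := mul_le_mul_of_nonneg_left hI (by positivity :
    (0:ℝ) ≤ t ^ (r + 1) / r.factorial)
  refine le_trans (le_of_eq ?_) this
  have hfac : (0:ℝ) < r.factorial := by exact_mod_cast r.factorial_pos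
  field_simp

lemma tail_le {δ' : ℝ} (hδ' : 0 < δ') (r : ℕ) {t : ℝ} (ht : 0 < t) :
    t ^ (r + 1) / r.factorial * ∫ s in Ioi δ', Real.exp (-(t * s)) * s ^ r ≤
      2 ^ (r + 1) * Real.exp (-(δ' / 2 * t)) := by
  have ht2 : (0:ℝ) < t / 2 := half_pos ht
  have hint1 : IntegrableOn (fun s : ℝ => Real.exp (-(t * s)) * s ^ r) (Ioi δ') :=
    (integrableOn_exp_pow ht r).mono_set (Ioi_subset_Ioi hδ'.le)
  have hint2 : IntegrableOn (fun s : ℝ => Real.exp (-(t / 2 * s)) * s ^ r) (Ioi δ') :=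
    (integrableOn_exp_pow ht2 r).mono_set (Ioi_subset_Ioi hδ'.le)
  have step1 : (∫ s in Ioi δ', Real.exp (-(t * s)) * s ^ r) ≤
      Real.exp (-(t / 2 * δ')) * ∫ s in Ioi δ', Real.exp (-(t / 2 * s)) * s ^ r := by
    rw [← integral_const_mul]
    refine setIntegral_mono_on hint1
      (IntegrableOn.congr_fun (hint2.const_mul _) (fun s _ => by ring) measurableSet_Ioi)
      measurableSet_Ioi fun s hs => ?_
    have hs0 : 0 < s := lt_trans hδ' hs
    have : Real.exp (-(t * s)) = Real.exp (-(t / 2 * s)) * Real.exp (-(t / 2 * s)) := by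
      rw [← Real.exp_add]; ring_nf
    rw [this]
    have hle : Real.exp (-(t / 2 * s)) ≤ Real.exp (-(t / 2 * δ')) := by
      apply Real.exp_le_exp.2
      have : δ' ≤ s := le_of_lt hs
      nlinarith
    calc Real.exp (-(t / 2 * s)) * Real.exp (-(t / 2 * s)) * s ^ r
        = Real.exp (-(t / 2 * s)) * (Real.exp (-(t / 2 * s)) * s ^ r) := by ring
      _ ≤ Real.exp (-(t / 2 * δ')) * (Real.exp (-(t / 2 * s)) * s ^ r) :=
          mul_le_mul_of_nonneg_right hle
            (mul_nonneg (Real.exp_pos _).le (pow_nonneg hs0.le r))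
  have step2 : (∫ s in Ioi δ', Real.exp (-(t / 2 * s)) * s ^ r) ≤
      r.factorial / (t / 2) ^ (r + 1) := by
    rw [← integral_exp_pow ht2 r]
    refine setIntegral_mono_set (integrableOn_exp_pow ht2 r)
      ((ae_restrict_iff' measurableSet_Ioi).2 (Filter.Eventually.of_forall fun s hs =>
        mul_nonneg (Real.exp_pos _).le (pow_nonneg (le_of_lt hs) r)))
      (HasSubset.Subset.eventuallyLE (Ioi_subset_Ioi hδ'.le))
  have hfac : (0:ℝ) < r.factorial := by exact_mod_cast r.factorial_pos
  have hnn : (0:ℝ) ≤ Real.exp (-(t / 2 * δ')) := (Real.exp_pos _).le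
  calc t ^ (r + 1) / r.factorial * ∫ s in Ioi δ', Real.exp (-(t * s)) * s ^ r
      ≤ t ^ (r + 1) / r.factorial *
        (Real.exp (-(t / 2 * δ')) * (r.factorial / (t / 2) ^ (r + 1))) := by
        refine mul_le_mul_of_nonneg_left ?_ (by positivity)
        exact step1.trans (mul_le_mul_of_nonneg_left step2 hnn)
    _ = 2 ^ (r + 1) * Real.exp (-(δ' / 2 * t)) := by
        rw [show -(t / 2 * δ') = -(δ' / 2 * t) by ring]
        rw [div_pow]
        field_simp

lemma tail_nonneg {δ' : ℝ} (hδ' : 0 < δ') (r : ℕ) {t : ℝ} (ht : 0 < t) :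
    0 ≤ t ^ (r + 1) / r.factorial * ∫ s in Ioi δ', Real.exp (-(t * s)) * s ^ r := by
  have hfac : (0:ℝ) < r.factorial := by exact_mod_cast r.factorial_pos
  refine mul_nonneg (by positivity) ?_
  refine setIntegral_nonneg measurableSet_Ioi fun s hs => ?_
  exact mul_nonneg (Real.exp_pos _).le (pow_nonneg (le_trans hδ'.le (le_of_lt hs)) r)

lemma tail_tendsto {δ' : ℝ} (hδ' : 0 < δ') (r : ℕ) :
    Tendsto (fun t : ℝ => t ^ (r + 1) / r.factorial *
      ∫ s in Ioi δ', Real.exp (-(t * s)) * s ^ r) atTop (nhds 0) := by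
  have hup : Tendsto (fun t : ℝ => 2 ^ (r + 1) * Real.exp (-(δ' / 2 * t))) atTop (nhds 0) := by
    have := (tendsto_pow_mul_exp (half_pos hδ') 0).const_mul ((2:ℝ) ^ (r + 1))
    rw [mul_zero] at this
    refine this.congr fun t => ?_
    rw [pow_zero, one_mul]
  refine tendsto_of_tendsto_of_tendsto_of_le_of_le' tendsto_const_nhds hup ?_ ?_
  · filter_upwards [eventually_gt_atTop (0:ℝ)] with t ht
    exact tail_nonneg hδ' r ht
  · filter_upwards [eventually_gt_atTop (0:ℝ)] with t ht
    exact tail_le hδ' r ht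

lemma err_tendsto {δ : ℝ} (hδ : 0 < δ) (r : ℕ) :
    Tendsto (fun t : ℝ => t ^ r * Real.exp (-(t * (δ / 2))) / r.factorial) atTop (nhds 0) := by
  have := (tendsto_pow_mul_exp (half_pos hδ) r).div_const (r.factorial : ℝ)
  rw [zero_div] at this
  refine this.congr fun t => ?_
  rw [show -(δ / 2 * t) = -(t * (δ / 2)) by ring]

lemma rho_nonneg (hp : ∀ j, 0 < p j) (j : ℕ) : 0 ≤ rho p r j :=
  div_nonneg (tsum_nonneg fun i => by split; exacts [pow_nonneg (hp i).le r, le_rfl])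
    (pow_nonneg (hp j).le r)

lemma partA (hp : ∀ j, 0 < p j) (hdec : ∀ j, p (j + 1) ≤ p j) (hsum : ∑' j : ℕ, p j = 1)
    (hr : 1 ≤ r) :
    Filter.liminf (fun j : ℕ => ((rho p r j : ℝ) : EReal)) Filter.atTop ≤
      Filter.liminf (fun t : ℝ => ((Phi p r t : ℝ) : EReal)) Filter.atTop := by
  set L := Filter.liminf (fun j : ℕ => ((rho p r j : ℝ) : EReal)) Filter.atTop with hLdef
  have key : ∀ c : ℝ, (c : EReal) < L →
      (c : EReal) ≤ Filter.liminf (fun t : ℝ => ((Phi p r t : ℝ) : EReal)) Filter.atTop := by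
    intro c hc
    obtain ⟨z, hz1, hz2⟩ := exists_between hc
    have hzbot : z ≠ ⊥ := (bot_le.trans_lt hz1).ne'
    have hztop : z ≠ ⊤ := (hz2.trans_le le_top).ne
    set c' := z.toReal with hc'def
    have hzc : z = (c' : EReal) := (EReal.coe_toReal hztop hzbot).symm
    have hcc' : c < c' := by rw [hzc] at hz1; exact_mod_cast hz1
    have hev : ∀ᶠ j in Filter.atTop, (c' : EReal) < ((rho p r j : ℝ) : EReal) :=
      Filter.eventually_lt_of_lt_liminf (hzc ▸ hz2)
    obtain ⟨J, hJ⟩ := Filter.eventually_atTop.1 hev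
    have hJ' : ∀ j, J ≤ j → c' ≤ rho p r j := by
      intro j hj
      exact_mod_cast (hJ j hj).le
    have hν := nu_lower hp hdec hsum hr J hJ'
    have hlow := phi_lower hp hsum hr (hp J) hν
    have htail := tail_tendsto (half_pos (hp J)) r
    have hten : Tendsto (fun t : ℝ => c' - c' * (t ^ (r + 1) / r.factorial *
        ∫ s in Ioi (p J / 2), Real.exp (-(t * s)) * s ^ r)) atTop (nhds c') := by
      have h2 := htail.const_mul c'
      rw [mul_zero] at h2
      have h3 := (tendsto_const_nhds :
        Tendsto (fun _ : ℝ => c') atTop (nhds c')).sub h2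
      rw [sub_zero] at h3
      exact h3
    have hev2 : ∀ᶠ t : ℝ in Filter.atTop, c < Phi p r t := by
      filter_upwards [hten.eventually (eventually_gt_nhds hcc'),
        eventually_gt_atTop (0:ℝ)] with t h1 h2
      exact lt_of_lt_of_le h1 (hlow t h2)
    refine Filter.le_liminf_of_le (by isBoundedDefault) ?_
    filter_upwards [hev2] with t ht
    exact_mod_cast ht.le
  by_contra hcon
  push_neg at hcon
  obtain ⟨z, hz1, hz2⟩ := exists_between hcon
  have hzbot : z ≠ ⊥ := (bot_le.trans_lt hz1).ne'
  have hztop : z ≠ ⊤ := (hz2.trans_le le_top).ne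
  have := key z.toReal (by rw [EReal.coe_toReal hztop hzbot]; exact hz2)
  rw [EReal.coe_toReal hztop hzbot] at this
  exact absurd (lt_of_le_of_lt this hz1) (lt_irrefl _)

lemma partB (hp : ∀ j, 0 < p j) (hdec : ∀ j, p (j + 1) ≤ p j) (hsum : ∑' j : ℕ, p j = 1)
    (hr : 1 ≤ r) :
    Filter.limsup (fun t : ℝ => ((Phi p r t : ℝ) : EReal)) Filter.atTop ≤
      1 + Filter.limsup (fun j : ℕ => ((rho p r j : ℝ) : EReal)) Filter.atTop := by
  set M := Filter.limsup (fun j : ℕ => ((rho p r j : ℝ) : EReal)) Filter.atTop with hMdef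
  have hM0 : (0 : EReal) ≤ M := by
    refine Filter.le_limsup_of_frequently_le ?_ (by isBoundedDefault)
    exact Filter.Frequently.of_forall fun j => by exact_mod_cast rho_nonneg hp j
  rcases eq_or_ne M ⊤ with hMtop | hMtop
  · rw [hMtop]
    rw [show (1 : EReal) + ⊤ = ⊤ from EReal.add_top_of_ne_bot (by rw [show (1:EReal) = ((1:ℝ):EReal) from rfl]; exact EReal.coe_ne_bot 1)]
    exact le_top
  have hMbot : M ≠ ⊥ := by
    intro h
    rw [h] at hM0
    exact absurd hM0 (by simp)
  have hMc : M = ((M.toReal : ℝ) : EReal) := (EReal.coe_toReal hMtop hMbot).symm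
  have hMt0 : 0 ≤ M.toReal := by
    rw [hMc] at hM0
    exact_mod_cast hM0
  have key : ∀ C : ℝ, (1 : EReal) + M < (C : EReal) →
      Filter.limsup (fun t : ℝ => ((Phi p r t : ℝ) : EReal)) Filter.atTop ≤ (C : EReal) := by
    intro C hC
    have hC' : 1 + M.toReal < C := by
      rw [hMc, show (1:EReal) = ((1:ℝ):EReal) from rfl, ← EReal.coe_add] at hC
      exact_mod_cast hC
    set z : ℝ := (M.toReal + (C - 1)) / 2 with hzdef
    have hz1 : M.toReal < z := by rw [hzdef]; linarith
    have hz2 : 1 + z < C := by rw [hzdef]; linarith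
    have hz0 : 0 ≤ z := le_trans hMt0 hz1.le
    have hev : ∀ᶠ j in Filter.atTop, ((rho p r j : ℝ) : EReal) < (z : EReal) :=
      Filter.eventually_lt_of_limsup_lt (by rw [← hMdef, hMc]; exact_mod_cast hz1)
    obtain ⟨J, hJ⟩ := Filter.eventually_atTop.1 hev
    have hJ' : ∀ j, J ≤ j → rho p r j ≤ z := by
      intro j hj
      exact_mod_cast (hJ j hj).le
    have hν := nu_upper hp hdec hsum hr J hJ'
    have hup := phi_upper hp hsum hr (by linarith : (0:ℝ) ≤ 1 + z) (hp J) hν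
    have herr := err_tendsto (hp J) r
    have hten : Tendsto (fun t : ℝ => (1 + z) +
        t ^ r * Real.exp (-(t * (p J / 2))) / r.factorial) atTop (nhds (1 + z)) := by
      have h3 := (tendsto_const_nhds :
        Tendsto (fun _ : ℝ => 1 + z) atTop (nhds (1 + z))).add herr
      rw [add_zero] at h3
      exact h3
    have hev2 : ∀ᶠ t : ℝ in Filter.atTop, Phi p r t ≤ C := by
      filter_upwards [hten.eventually (eventually_lt_nhds hz2),
        eventually_gt_atTop (0:ℝ)] with t h1 h2
      exact le_of_lt (lt_of_le_of_lt (hup t h2) h1)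
    refine Filter.limsup_le_of_le (by isBoundedDefault) ?_
    filter_upwards [hev2] with t ht
    exact_mod_cast ht
  by_contra hcon
  push_neg at hcon
  obtain ⟨z, hz1, hz2⟩ := exists_between hcon
  have hzbot : z ≠ ⊥ := (bot_le.trans_lt hz1).ne'
  have hztop : z ≠ ⊤ := (hz2.trans_le le_top).ne
  have := key z.toReal (by rw [EReal.coe_toReal hztop hzbot]; exact hz1)
  rw [EReal.coe_toReal hztop hzbot] at this
  exact absurd (lt_of_lt_of_le hz2 this) (lt_irrefl _)

end

theorem stmt_14 (p : ℕ → ℝ) (hp : ∀ j, 0 < p j) (hdec : ∀ j, p (j + 1) ≤ p j)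
    (hsum : ∑' j : ℕ, p j = 1) (r : ℕ) (hr : 1 ≤ r) :
    (∀ j : ℕ, ∀ x : ℝ, p (j + 1) ≤ x → x < p j →
      rho p r j = nuMass p r (p (j + 1)) / p j ^ r ∧
      nuMass p r (p (j + 1)) / p j ^ r < nuMass p r x / x ^ r ∧
      nuMass p r x / x ^ r ≤ 1 + rho p r (j + 1)) ∧
    Filter.liminf (fun j : ℕ => ((rho p r j : ℝ) : EReal)) Filter.atTop ≤
      Filter.liminf (fun t : ℝ => ((Phi p r t : ℝ) : EReal)) Filter.atTop ∧
    Filter.liminf (fun t : ℝ => ((Phi p r t : ℝ) : EReal)) Filter.atTop ≤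
      Filter.limsup (fun t : ℝ => ((Phi p r t : ℝ) : EReal)) Filter.atTop ∧
    Filter.limsup (fun t : ℝ => ((Phi p r t : ℝ) : EReal)) Filter.atTop ≤
      1 + Filter.limsup (fun j : ℕ => ((rho p r j : ℝ) : EReal)) Filter.atTop :=
  ⟨fun j x h1 h2 => part1 hp hdec hsum hr j x h1 h2,
    partA hp hdec hsum hr,
    Filter.liminf_le_limsup,
    partB hp hdec hsum hr⟩
end

section
/- If limsup_{j→∞} p_{j+1}/p_j < 1 then sup_{t>0} Φ_r(t) < ∞ for every r ≥ 1; if lim_{j→∞} p_{j+1}/p_j = 1 then Φ_r(t) → ∞ as t → ∞ for every r ≥ 1. -/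
open Filter

lemma pow_le_fact_mul_exp (x : ℝ) (hx : 0 ≤ x) (n : ℕ) : x ^ n ≤ n.factorial * Real.exp x := by
  have h := Real.sum_le_exp_of_nonneg hx (n+1)
  have h2 : x ^ n / n.factorial ≤ ∑ i ∈ Finset.range (n+1), x ^ i / i.factorial :=
    Finset.single_le_sum (f := fun i => x ^ i / (i.factorial:ℝ))
      (fun i _ => by positivity) (Finset.self_mem_range_succ n)
  have h3 := h2.trans h
  rw [div_le_iff₀ (by positivity)] at h3
  linarith [h3]

lemma f_le_one (x : ℝ) (hx : 0 ≤ x) (r : ℕ) :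
    Real.exp (-x) * x ^ r / r.factorial ≤ 1 := by
  rw [div_le_one (by positivity)]
  have h := pow_le_fact_mul_exp x hx r
  calc Real.exp (-x) * x ^ r ≤ Real.exp (-x) * (r.factorial * Real.exp x) :=
        mul_le_mul_of_nonneg_left h (Real.exp_nonneg _)
    _ = r.factorial * (Real.exp (-x) * Real.exp x) := by ring
    _ = r.factorial := by rw [← Real.exp_add]; simp

lemma f_le_x (x : ℝ) (hx : 0 ≤ x) (r : ℕ) (hr : 1 ≤ r) :
    Real.exp (-x) * x ^ r / r.factorial ≤ x := by
  obtain ⟨s, rfl⟩ : ∃ s, r = s + 1 := ⟨r - 1, by omega⟩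
  have h := pow_le_fact_mul_exp x hx s
  have hfac : (s.factorial : ℝ) ≤ (s+1).factorial := by
    exact_mod_cast Nat.factorial_le (Nat.le_succ s)
  have key : Real.exp (-x) * x ^ (s+1) ≤ (s+1).factorial * x := by
    calc Real.exp (-x) * x ^ (s+1) = x * (Real.exp (-x) * x ^ s) := by ring
      _ ≤ x * (Real.exp (-x) * (s.factorial * Real.exp x)) :=
          mul_le_mul_of_nonneg_left (mul_le_mul_of_nonneg_left h (Real.exp_nonneg _)) hx
      _ = (s.factorial : ℝ) * x * (Real.exp (-x) * Real.exp x) := by ring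
      _ = (s.factorial : ℝ) * x := by rw [← Real.exp_add]; simp
      _ ≤ (s+1).factorial * x := mul_le_mul_of_nonneg_right hfac hx
  rw [div_le_iff₀ (by positivity)]
  calc Real.exp (-x) * x ^ (s+1) ≤ (s+1).factorial * x := key
    _ = x * (s+1).factorial := by ring

lemma f_le_inv (x : ℝ) (hx : 0 < x) (r : ℕ) :
    Real.exp (-x) * x ^ r / r.factorial ≤ (r + 1) / x := by
  have h := pow_le_fact_mul_exp x hx.le (r+1)
  have key : Real.exp (-x) * x ^ r * x ≤ (r+1).factorial := by
    calc Real.exp (-x) * x ^ r * x = Real.exp (-x) * x ^ (r+1) := by ring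
      _ ≤ Real.exp (-x) * ((r+1).factorial * Real.exp x) :=
          mul_le_mul_of_nonneg_left h (Real.exp_nonneg _)
      _ = (r+1).factorial * (Real.exp (-x) * Real.exp x) := by ring
      _ = (r+1).factorial := by rw [← Real.exp_add]; simp
  rw [div_le_div_iff₀ (by positivity) hx]
  have hfac : ((r+1).factorial : ℝ) = (r+1) * r.factorial := by
    exact_mod_cast Nat.factorial_succ r
  have hfp : (0:ℝ) < r.factorial := by positivity
  nlinarith [key]

set_option maxHeartbeats 1000000 in
theorem stmt_16 (p : ℕ → ℝ) (hp : ∀ j, 0 < p j) (hdec : ∀ j, p (j + 1) ≤ p j)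
    (hsum : ∑' j : ℕ, p j = 1) :
    (Filter.limsup (fun j : ℕ => p (j + 1) / p j) Filter.atTop < 1 →
      ∀ r : ℕ, 1 ≤ r → ∃ M : ℝ, ∀ t : ℝ, 0 < t → Phi p r t ≤ M) ∧
    (Filter.Tendsto (fun j : ℕ => p (j + 1) / p j) Filter.atTop (nhds 1) →
      ∀ r : ℕ, 1 ≤ r →
        Filter.Tendsto (fun t => Phi p r t) Filter.atTop Filter.atTop) := by
  have hps : Summable p := by
    by_contra h
    rw [tsum_eq_zero_of_not_summable h] at hsum
    norm_num at hsum
  have hanti : Antitone p := antitone_nat_of_succ_le hdec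
  constructor
  · -- Part 1
    intro hlim r hr
    obtain ⟨c₀, hc₀1, hc₀2⟩ := exists_between hlim
    have hratup : ∀ j, p (j+1)/p j ≤ 1 := fun j => div_le_one_of_le₀ (hdec j) (hp j).le
    have hev : ∀ᶠ j in atTop, p (j+1)/p j < c₀ :=
      eventually_lt_of_limsup_lt hc₀1
        (isBoundedUnder_of_eventually_le (Eventually.of_forall hratup))
    set c := max c₀ (1/2) with hcdef
    have hc1 : c < 1 := max_lt hc₀2 (by norm_num)
    have hc0 : (0:ℝ) < c := lt_of_lt_of_le (by norm_num) (le_max_right _ _)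
    obtain ⟨J, hJ⟩ := eventually_atTop.mp hev
    have hgeo : ∀ j, J ≤ j → p (j+1) ≤ c * p j := by
      intro j hj
      have h2 : p (j+1)/p j ≤ c := ((hJ j hj).le).trans (le_max_left _ _)
      have := mul_le_mul_of_nonneg_right h2 (hp j).le
      rwa [div_mul_cancel₀ _ (hp j).ne'] at this
    have hpow : ∀ j, J ≤ j → ∀ k, p (j + k) ≤ c ^ k * p j := by
      intro j hj k
      induction k with
      | zero => simp
      | succ k ih =>
        have h1 : p (j + (k+1)) ≤ c * p (j + k) := hgeo (j + k) (by omega)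
        calc p (j + (k+1)) ≤ c * p (j + k) := h1
          _ ≤ c * (c ^ k * p j) := mul_le_mul_of_nonneg_left ih hc0.le
          _ = c ^ (k+1) * p j := by ring
    refine ⟨(J:ℝ) + (r+1) * (1-c)⁻¹ + (1-c)⁻¹, ?_⟩
    intro t ht
    set g : ℕ → ℝ := fun j => Real.exp (-(t * p j)) * (t * p j) ^ r / r.factorial with hgdef
    have hg0 : ∀ j, 0 ≤ g j := fun j => by
      have := (hp j); positivity
    have hgle : ∀ j, g j ≤ t * p j := fun j =>
      f_le_x _ (by have := (hp j).le; positivity) r hr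
    have hgs : Summable g := Summable.of_nonneg_of_le hg0 hgle (hps.mul_left t)
    have hPhi : Phi p r t = ∑' j, g j := rfl
    have hinv : (0:ℝ) < (1-c)⁻¹ := by
      have : (0:ℝ) < 1 - c := by linarith
      positivity
    -- split at J
    have hsplit1 : ∑ i ∈ Finset.range J, g i + ∑' i, g (i + J) = ∑' i, g i :=
      Summable.sum_add_tsum_nat_add J hgs
    have hhead : ∑ i ∈ Finset.range J, g i ≤ J := by
      calc ∑ i ∈ Finset.range J, g i ≤ ∑ i ∈ Finset.range J, 1 :=
            Finset.sum_le_sum (fun i _ => f_le_one _ (by have := (hp i).le; positivity) r)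
        _ = J := by simp
    -- find m
    have hex : ∃ k, t * p (k + J) ≤ 1 := by
      obtain ⟨n, hn⟩ := exists_pow_lt_of_lt_one
        (show (0:ℝ) < 1/(t * p J) by have := hp J; positivity) hc1
      refine ⟨n, ?_⟩
      have h1 : p (n + J) ≤ c ^ n * p J := by
        have := hpow J le_rfl n; rwa [add_comm]
      have h2 : c ^ n * p J < (1/(t * p J)) * p J :=
        mul_lt_mul_of_pos_right hn (hp J)
      have hn' : c ^ n * (t * p J) < 1 := by
        rw [lt_div_iff₀ (by have := hp J; positivity)] at hn
        linarith
      nlinarith [hp J, (hp (n+J)).le]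
    obtain ⟨m, hm, hmlt'⟩ : ∃ m, t * p (m + J) ≤ 1 ∧ ∀ k, k < m → ¬(t * p (k + J) ≤ 1) := by
      classical
      exact ⟨Nat.find hex, Nat.find_spec hex, fun k hk => Nat.find_min hex hk⟩
    have hmlt : ∀ k, k < m → 1 < t * p (k + J) := fun k hk => lt_of_not_ge (hmlt' k hk)
    -- split tail at m
    have hgs2 : Summable (fun k => g (k + J)) := (summable_nat_add_iff J).2 hgs
    have hsplit2 : ∑ k ∈ Finset.range m, g (k + J) + ∑' k, g (k + m + J)
        = ∑' k, g (k + J) := by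
      have := Summable.sum_add_tsum_nat_add m hgs2
      simpa using this
    -- mid bound
    have hmid : ∑ k ∈ Finset.range m, g (k + J) ≤ (r+1) * (1-c)⁻¹ := by
      have hterm : ∀ k ∈ Finset.range m, g (k + J) ≤ (r+1) * c ^ (m-1-k) := by
        intro k hk
        rw [Finset.mem_range] at hk
        have hx : 1 < t * p (k + J) := hmlt k hk
        have hxpos : 0 < t * p (k + J) := lt_trans one_pos hx
        have h1 : g (k + J) ≤ (r+1)/(t * p (k + J)) := f_le_inv _ hxpos r
        have h2 : p ((m-1) + J) ≤ c ^ (m-1-k) * p (k + J) := by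
          have := hpow (k + J) (by omega) (m-1-k)
          have heq : k + J + (m-1-k) = (m-1) + J := by omega
          rwa [heq] at this
        have h3 : 1 < t * p ((m-1) + J) := hmlt (m-1) (by omega)
        have h4 : 1 < c ^ (m-1-k) * (t * p (k + J)) := by nlinarith
        have h5 : (r+1)/(t * p (k + J)) ≤ (r+1) * c ^ (m-1-k) := by
          rw [div_le_iff₀ hxpos]
          have hrp : (0:ℝ) ≤ (r:ℝ) + 1 := by positivity
          nlinarith
        linarith
      calc ∑ k ∈ Finset.range m, g (k + J)
          ≤ ∑ k ∈ Finset.range m, (r+1) * c ^ (m-1-k) := Finset.sum_le_sum hterm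
        _ = (r+1) * ∑ k ∈ Finset.range m, c ^ (m-1-k) := by
            rw [Finset.mul_sum]
        _ = (r+1) * ∑ k ∈ Finset.range m, c ^ k := by
            rw [Finset.sum_range_reflect (fun i => c ^ i) m]
        _ ≤ (r+1) * (1-c)⁻¹ := by
            have hle : ∑ k ∈ Finset.range m, c ^ k ≤ (1-c)⁻¹ := by
              rw [← tsum_geometric_of_lt_one hc0.le hc1]
              exact Summable.sum_le_tsum _ (fun i _ => by positivity)
                (summable_geometric_of_lt_one hc0.le hc1)
            have hrp : (0:ℝ) ≤ (r:ℝ) + 1 := by positivity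
            exact mul_le_mul_of_nonneg_left hle hrp
    -- far tail bound
    have htail : ∑' k, g (k + m + J) ≤ (1-c)⁻¹ := by
      have hterm : ∀ k, g (k + m + J) ≤ c ^ k := by
        intro k
        have h1 : g (k + m + J) ≤ t * p (k + m + J) := hgle _
        have h2 : p (k + m + J) ≤ c ^ k * p (m + J) := by
          have := hpow (m + J) (by omega) k
          have heq : m + J + k = k + m + J := by omega
          rwa [heq] at this
        have h3 : t * p (k + m + J) ≤ c ^ k * (t * p (m + J)) := by nlinarith
        have h4 : c ^ k * (t * p (m + J)) ≤ c ^ k * 1 :=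
          mul_le_mul_of_nonneg_left hm (by positivity)
        calc g (k + m + J) ≤ t * p (k + m + J) := h1
          _ ≤ c ^ k * (t * p (m + J)) := h3
          _ ≤ c ^ k := by linarith
      calc ∑' k, g (k + m + J) ≤ ∑' k, c ^ k := by
            refine Summable.tsum_le_tsum hterm ?_ (summable_geometric_of_lt_one hc0.le hc1)
            have h : Summable (fun k => g (k + (m + J))) := (summable_nat_add_iff (m+J)).2 hgs
            simpa [← add_assoc] using h
        _ = (1-c)⁻¹ := tsum_geometric_of_lt_one hc0.le hc1
    rw [hPhi, ← hsplit1, ← hsplit2]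
    linarith
  · -- Part 2
    intro hlim r hr
    rw [tendsto_atTop]
    intro b
    have hr0 : (0:ℝ) < r := by exact_mod_cast hr
    set δ : ℝ := Real.exp (-(r:ℝ)) * ((r:ℝ)/2) ^ r / r.factorial with hδdef
    have hδ : 0 < δ := by positivity
    obtain ⟨N₀, hN₀⟩ := exists_nat_ge (b / δ)
    set N := N₀ + 1 with hNdef
    have hNδ : b ≤ N * δ := by
      have h1 : b / δ ≤ (N:ℝ) := le_trans hN₀ (by exact_mod_cast Nat.le_succ N₀)
      calc b = b / δ * δ := by field_simp
        _ ≤ N * δ := mul_le_mul_of_nonneg_right h1 hδ.le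
    have hN0 : (0:ℝ) < N := by positivity
    set θ : ℝ := 1 - 1/(2*N) with hθdef
    have h2N : (0:ℝ) < 2*N := by positivity
    have hθhalf : (1/2 : ℝ) ≤ θ := by
      rw [hθdef]
      have : 1/(2*(N:ℝ)) ≤ 1/2 := by
        apply div_le_div_of_nonneg_left (by norm_num) (by norm_num)
        have : (1:ℝ) ≤ N := by exact_mod_cast Nat.one_le_iff_ne_zero.mpr (by omega)
        linarith
      linarith
    have hθ0 : (0:ℝ) < θ := lt_of_lt_of_le (by norm_num) hθhalf
    have hθ1 : θ < 1 := by
      rw [hθdef]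
      have : (0:ℝ) < 1/(2*N) := by positivity
      linarith
    have hθN : (1/2 : ℝ) ≤ θ ^ N := by
      have h := one_add_mul_le_pow (a := -(1/(2*(N:ℝ)))) (by nlinarith [one_div_pos.mpr h2N]) N
      have heq : (1:ℝ) + N * (-(1/(2*N))) = 1/2 := by field_simp; ring
      have heq2 : (1:ℝ) + (-(1/(2*(N:ℝ)))) = θ := by rw [hθdef]; ring
      rw [heq2] at h
      linarith [h, heq ▸ h]
    have hevθ : ∀ᶠ j in atTop, θ < p (j+1)/p j := hlim.eventually (eventually_gt_nhds hθ1)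
    obtain ⟨J, hJ⟩ := eventually_atTop.mp hevθ
    have hstep : ∀ j, J ≤ j → θ * p j ≤ p (j+1) := by
      intro j hj
      have h1 := (hJ j hj).le
      have := mul_le_mul_of_nonneg_right h1 (hp j).le
      rwa [div_mul_cancel₀ _ (hp j).ne'] at this
    have hgrow : ∀ j, J ≤ j → ∀ k, θ ^ k * p j ≤ p (j + k) := by
      intro j hj k
      induction k with
      | zero => simp
      | succ k ih =>
        have h1 : θ * p (j + k) ≤ p (j + (k+1)) := hstep (j + k) (by omega)
        calc θ ^ (k+1) * p j = θ * (θ ^ k * p j) := by ring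
          _ ≤ θ * p (j + k) := mul_le_mul_of_nonneg_left ih hθ0.le
          _ ≤ p (j + (k+1)) := h1
    filter_upwards [eventually_ge_atTop ((r:ℝ) / p J), eventually_ge_atTop 1] with t htJ ht1
    have ht : (0:ℝ) < t := lt_of_lt_of_le one_pos ht1
    have hrt : (r:ℝ) ≤ t * p J := by
      rw [div_le_iff₀ (hp J)] at htJ
      linarith [htJ]
    set g : ℕ → ℝ := fun j => Real.exp (-(t * p j)) * (t * p j) ^ r / r.factorial with hgdef
    have hg0 : ∀ j, 0 ≤ g j := fun j => by
      have := (hp j); positivity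
    have hgle : ∀ j, g j ≤ t * p j := fun j =>
      f_le_x _ (by have := (hp j).le; positivity) r hr
    have hgs : Summable g := Summable.of_nonneg_of_le hg0 hgle (hps.mul_left t)
    have hex : ∃ j, t * p j < r := by
      have hrtpos : (0:ℝ) < r/t := by positivity
      obtain ⟨j, hj⟩ := (hps.tendsto_atTop_zero.eventually (eventually_lt_nhds hrtpos)).exists
      refine ⟨j, ?_⟩
      have := mul_lt_mul_of_pos_left hj ht
      rwa [mul_div_cancel₀ _ ht.ne'] at this
    obtain ⟨m, hm, hmin'⟩ : ∃ m, t * p m < r ∧ ∀ k, k < m → ¬(t * p k < r) := by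
      classical
      exact ⟨Nat.find hex, Nat.find_spec hex, fun k hk => Nat.find_min hex hk⟩
    have hmin : ∀ k, k < m → (r:ℝ) ≤ t * p k := fun k hk => le_of_not_gt (hmin' k hk)
    have hJm : J < m := by
      by_contra h
      push_neg at h
      have h1 : p J ≤ p m := hanti h
      have h2 : t * p J ≤ t * p m := mul_le_mul_of_nonneg_left h1 ht.le
      linarith
    have key : ∀ k, k < N → δ ≤ g (m + k) := by
      intro k hk
      set x := t * p (m + k) with hxdef
      have hxr : x ≤ r := by
        have h1 : p (m + k) ≤ p m := hanti (by omega)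
        have h2 : t * p (m + k) ≤ t * p m := mul_le_mul_of_nonneg_left h1 ht.le
        linarith
      have hxlow : (r:ℝ)/2 ≤ x := by
        have h1 : θ ^ (k+1) * p (m-1) ≤ p ((m-1) + (k+1)) := hgrow (m-1) (by omega) (k+1)
        have heq : (m-1) + (k+1) = m + k := by omega
        rw [heq] at h1
        have h2 : (r:ℝ) ≤ t * p (m-1) := hmin (m-1) (by omega)
        have h3 : θ ^ N ≤ θ ^ (k+1) := pow_le_pow_of_le_one hθ0.le hθ1.le (by omega)
        have h4 : θ ^ (k+1) * (t * p (m-1)) ≤ t * p (m + k) := by nlinarith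
        have h5 : θ ^ N * r ≤ θ ^ (k+1) * (t * p (m-1)) := by nlinarith [pow_pos hθ0 (k+1), pow_pos hθ0 N]
        have h6 : (1/2:ℝ) * r ≤ θ ^ N * r := mul_le_mul_of_nonneg_right hθN hr0.le
        rw [hxdef]
        linarith
      have hxpos : (0:ℝ) ≤ x := by linarith [hr0, hxlow]
      rw [hgdef]
      show δ ≤ Real.exp (-(t * p (m+k))) * (t * p (m+k)) ^ r / r.factorial
      rw [hδdef, ← hxdef]
      have hexp : Real.exp (-(r:ℝ)) ≤ Real.exp (-x) := Real.exp_le_exp.2 (neg_le_neg hxr)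
      have hpw : ((r:ℝ)/2) ^ r ≤ x ^ r := pow_le_pow_left₀ (by positivity) hxlow r
      have hmm : Real.exp (-(r:ℝ)) * ((r:ℝ)/2) ^ r ≤ Real.exp (-x) * x ^ r :=
        mul_le_mul hexp hpw (by positivity) (Real.exp_nonneg _)
      exact (div_le_div_iff_of_pos_right (by positivity : (0:ℝ) < r.factorial)).2 hmm
    have hPhi : Phi p r t = ∑' j, g j := rfl
    set s : Finset ℕ := Finset.image (fun k => m + k) (Finset.range N) with hsdef
    have hsum_s : ∑ j ∈ s, g j = ∑ k ∈ Finset.range N, g (m + k) := by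
      rw [hsdef]
      exact Finset.sum_image (fun x _ y _ h => by omega)
    have h1 : (N:ℝ) * δ ≤ ∑ k ∈ Finset.range N, g (m + k) := by
      calc (N:ℝ) * δ = ∑ _k ∈ Finset.range N, δ := by
            rw [Finset.sum_const, Finset.card_range, nsmul_eq_mul]
        _ ≤ ∑ k ∈ Finset.range N, g (m + k) :=
            Finset.sum_le_sum (fun k hk => key k (Finset.mem_range.mp hk))
    have h2 : ∑ j ∈ s, g j ≤ ∑' j, g j := Summable.sum_le_tsum s (fun i _ => hg0 i) hgs
    rw [hPhi]
    linarith [hsum_s ▸ h2]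
end

section
/- Suppose that for some 0 < λ < 1 and every h ≥ 1, liminf_{j→∞} p_{j+h}/p_j > λ. Then Φ_r(t) → ∞ as t → ∞ for all r ≥ 1. -/
open Filter Finset

/-- Each term of `Phi` is bounded by `t * p j` when `r ≥ 1`. -/
lemma phi_term_le (y : ℝ) (hy : 0 ≤ y) (r : ℕ) (hr : 1 ≤ r) :
    Real.exp (-y) * y ^ r / r.factorial ≤ y := by
  obtain ⟨m, rfl⟩ := Nat.exists_eq_add_of_le hr
  have h1 : y ^ m / m.factorial ≤ Real.exp y := Real.pow_div_factorial_le_exp y hy m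
  have hfac : (m.factorial : ℝ) ≤ ((1 + m).factorial : ℝ) := by
    exact_mod_cast Nat.factorial_le (by omega)
  have hfp : (0:ℝ) < m.factorial := by exact_mod_cast m.factorial_pos
  have hfp' : (0:ℝ) < (1 + m).factorial := by exact_mod_cast (1 + m).factorial_pos
  have hpow : y ^ (1 + m) = y * y ^ m := by rw [pow_add, pow_one]
  have hexp : 0 < Real.exp (-y) := Real.exp_pos _
  have key : y ^ (1 + m) / (1 + m).factorial ≤ y * Real.exp y := by
    rw [hpow]
    calc y * y ^ m / (1 + m).factorial ≤ y * y ^ m / m.factorial := by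
          apply div_le_div_of_nonneg_left (by positivity) hfp hfac
      _ = y * (y ^ m / m.factorial) := by ring
      _ ≤ y * Real.exp y := by
          exact mul_le_mul_of_nonneg_left h1 hy
  calc Real.exp (-y) * y ^ (1 + m) / (1 + m).factorial
      = Real.exp (-y) * (y ^ (1 + m) / (1 + m).factorial) := by ring
    _ ≤ Real.exp (-y) * (y * Real.exp y) := by
        exact mul_le_mul_of_nonneg_left key hexp.le
    _ = y * (Real.exp (-y) * Real.exp y) := by ring
    _ = y := by rw [← Real.exp_add]; simp

theorem stmt_17 (p : ℕ → ℝ) (hp : ∀ j, 0 < p j) (hdec : ∀ j, p (j + 1) ≤ p j)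
    (hsum : ∑' j : ℕ, p j = 1) (lam : ℝ) (hlam0 : 0 < lam) (hlam1 : lam < 1)
    (hliminf : ∀ h : ℕ, 1 ≤ h →
      lam < Filter.liminf (fun j : ℕ => p (j + h) / p j) Filter.atTop) :
    ∀ r : ℕ, 1 ≤ r →
      Filter.Tendsto (fun t => Phi p r t) Filter.atTop Filter.atTop := by
  intro r hr
  have hsummable : Summable p := by
    by_contra h
    rw [tsum_eq_zero_of_not_summable h] at hsum
    norm_num at hsum
  have hanti : Antitone p := antitone_nat_of_succ_le hdec
  have hp0 : Tendsto p atTop (nhds 0) := hsummable.tendsto_atTop_zero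
  rw [tendsto_atTop]
  intro C
  set c : ℝ := Real.exp (-1) * (lam ^ 2) ^ r / r.factorial with hc
  have hcpos : 0 < c := by positivity
  obtain ⟨n₀, hn₀⟩ := exists_nat_ge (C / c)
  set n : ℕ := max n₀ 1 with hn
  have hn1 : 1 ≤ n := le_max_right _ _
  have hCn : C ≤ n * c := by
    have h1 : C / c ≤ (n : ℝ) := hn₀.trans (by exact_mod_cast le_max_left n₀ 1)
    calc C = (C / c) * c := by field_simp
      _ ≤ n * c := mul_le_mul_of_nonneg_right h1 hcpos.le
  -- eventual inequalities from the liminf hypothesis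
  have hbdd : ∀ h : ℕ, atTop.IsBoundedUnder (· ≥ ·) (fun j : ℕ => p (j + h) / p j) := by
    intro h
    exact Filter.isBoundedUnder_of ⟨0, fun j => div_nonneg (hp _).le (hp _).le⟩
  have hev1 : ∀ᶠ j in atTop, lam < p (j + 1) / p j :=
    eventually_lt_of_lt_liminf (hliminf 1 le_rfl) (hbdd 1)
  have hevn : ∀ᶠ j in atTop, lam < p (j + n) / p j :=
    eventually_lt_of_lt_liminf (hliminf n hn1) (hbdd n)
  obtain ⟨J, hJ⟩ := eventually_atTop.1 (hev1.and hevn)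
  have hpJ : 0 < p J := hp J
  filter_upwards [eventually_ge_atTop (1 / p J + 1)] with t ht
  have hinv : 0 ≤ 1 / p J := by positivity
  have ht1 : (1:ℝ) ≤ t := by linarith
  have htpos : 0 < t := lt_of_lt_of_le one_pos ht1
  have htJ : 1 < t * p J := by
    rw [← div_lt_iff₀ hpJ]
    linarith
  -- find the first index with t * p j ≤ 1
  have hex : ∃ j, t * p j ≤ 1 := by
    have := (hp0.eventually (gt_mem_nhds (show (0:ℝ) < 1 / t by positivity)))
    obtain ⟨j, hj⟩ := this.exists
    exact ⟨j, by rw [mul_comm, ← le_div_iff₀ htpos]; exact hj.le⟩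
  classical
  set j₀ := Nat.find hex with hj₀def
  have hj₀ : t * p j₀ ≤ 1 := Nat.find_spec hex
  have hJlt : J < j₀ := by
    by_contra hcon
    push_neg at hcon
    have h' : p J ≤ p j₀ := hanti hcon
    have := mul_le_mul_of_nonneg_left h' htpos.le
    linarith
  obtain ⟨m, hm⟩ : ∃ m, j₀ = m + 1 := ⟨j₀ - 1, by omega⟩
  have hmJ : J ≤ m := by omega
  have hmlt : ¬ (t * p m ≤ 1) := Nat.find_min hex (by omega)
  push_neg at hmlt
  -- t * p j₀ > lam
  have h1m := (hJ m hmJ).1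
  have hpm : 0 < p m := hp m
  have hlow : lam < t * p j₀ := by
    have hx : lam * p m < p (m + 1) := (lt_div_iff₀ hpm).1 h1m
    calc lam = lam * 1 := by ring
      _ < lam * (t * p m) := by exact mul_lt_mul_of_pos_left hmlt hlam0
      _ = t * (lam * p m) := by ring
      _ < t * p (m + 1) := mul_lt_mul_of_pos_left hx htpos
      _ = t * p j₀ := by rw [hm]
  -- t * p (j₀ + n) > lam ^ 2
  have hJj₀ : J ≤ j₀ := hJlt.le
  have h2 := (hJ j₀ hJj₀).2
  have hpj₀ : 0 < p j₀ := hp j₀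
  have hlow2 : lam ^ 2 < t * p (j₀ + n) := by
    have hx : lam * p j₀ < p (j₀ + n) := (lt_div_iff₀ hpj₀).1 h2
    calc lam ^ 2 = lam * lam := sq lam
      _ < lam * (t * p j₀) := mul_lt_mul_of_pos_left hlow hlam0
      _ = t * (lam * p j₀) := by ring
      _ < t * p (j₀ + n) := mul_lt_mul_of_pos_left hx htpos
  -- each term in Icc j₀ (j₀ + n) contributes at least c
  have hterm : ∀ i ∈ Finset.Icc j₀ (j₀ + n),
      c ≤ Real.exp (-(t * p i)) * (t * p i) ^ r / r.factorial := by
    intro i hi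
    rw [Finset.mem_Icc] at hi
    have hup : t * p i ≤ 1 := by
      have h' : p i ≤ p j₀ := hanti hi.1
      have := mul_le_mul_of_nonneg_left h' htpos.le
      linarith
    have hlo : lam ^ 2 ≤ t * p i := by
      have h' : p (j₀ + n) ≤ p i := hanti hi.2
      have := mul_le_mul_of_nonneg_left h' htpos.le
      linarith
    have hexp : Real.exp (-1) ≤ Real.exp (-(t * p i)) := by
      apply Real.exp_le_exp.2; linarith
    have hpow : (lam ^ 2) ^ r ≤ (t * p i) ^ r :=
      pow_le_pow_left₀ (by positivity) hlo r
    have hfp : (0:ℝ) < r.factorial := by exact_mod_cast r.factorial_pos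
    rw [hc, div_le_div_iff_of_pos_right hfp]
    calc Real.exp (-1) * (lam ^ 2) ^ r ≤ Real.exp (-1) * (t * p i) ^ r :=
          mul_le_mul_of_nonneg_left hpow (Real.exp_pos _).le
      _ ≤ Real.exp (-(t * p i)) * (t * p i) ^ r :=
          mul_le_mul_of_nonneg_right hexp (pow_nonneg (mul_nonneg htpos.le (hp i).le) r)
  -- summability of the Phi terms
  have hsummΦ : Summable (fun j => Real.exp (-(t * p j)) * (t * p j) ^ r / r.factorial) := by
    apply Summable.of_nonneg_of_le
      (fun j => div_nonneg (mul_nonneg (Real.exp_pos _).le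
        (pow_nonneg (mul_nonneg htpos.le (hp j).le) r)) (Nat.cast_nonneg _))
      (fun j => phi_term_le (t * p j) (mul_nonneg htpos.le (hp j).le) r hr)
    exact hsummable.mul_left t
  -- put everything together
  have hsumIcc : ((Finset.Icc j₀ (j₀ + n)).card : ℝ) * c ≤
      ∑ i ∈ Finset.Icc j₀ (j₀ + n),
        Real.exp (-(t * p i)) * (t * p i) ^ r / r.factorial := by
    have := Finset.card_nsmul_le_sum (Finset.Icc j₀ (j₀ + n))
      (fun i => Real.exp (-(t * p i)) * (t * p i) ^ r / r.factorial) c hterm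
    simpa [nsmul_eq_mul] using this
  have hcard : (Finset.Icc j₀ (j₀ + n)).card = n + 1 := by
    rw [Nat.card_Icc]; omega
  have hΦ : ∑ i ∈ Finset.Icc j₀ (j₀ + n),
      Real.exp (-(t * p i)) * (t * p i) ^ r / r.factorial ≤ Phi p r t :=
    Summable.sum_le_tsum _ (fun i _ => div_nonneg (mul_nonneg (Real.exp_pos _).le
      (pow_nonneg (mul_nonneg htpos.le (hp i).le) r)) (Nat.cast_nonneg _)) hsummΦ
  calc C ≤ n * c := hCn
    _ ≤ (n + 1 : ℕ) * c := by
        apply mul_le_mul_of_nonneg_right _ hcpos.le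
        exact_mod_cast Nat.le_succ n
    _ = ((Finset.Icc j₀ (j₀ + n)).card : ℝ) * c := by rw [hcard]
    _ ≤ _ := hsumIcc
    _ ≤ Phi p r t := hΦ
end

section
/- limsup_{t→∞} Φ_r(t) < ∞ holds for some (equivalently all) r ≥ 1 if and only if there exists h ≥ 1 with limsup_{j→∞} p_{j+h}/p_j ≤ 1/2. -/
open Filter Finset Real

section Aux

lemma pow_div_fact_le_exp (x : ℝ) (hx : 0 ≤ x) (n : ℕ) :
    x ^ n / n.factorial ≤ Real.exp x := by
  calc x ^ n / n.factorial ≤ ∑ i ∈ range (n + 1), x ^ i / i.factorial :=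
        Finset.single_le_sum (f := fun i => x ^ i / i.factorial)
          (fun i _ => by positivity) (by simp)
    _ ≤ Real.exp x := Real.sum_le_exp_of_nonneg hx _

lemma term_le_one (r : ℕ) {x : ℝ} (hx : 0 ≤ x) :
    Real.exp (-x) * x ^ r / r.factorial ≤ 1 := by
  have h := pow_div_fact_le_exp x hx r
  have he : Real.exp (-x) = (Real.exp x)⁻¹ := Real.exp_neg x
  have hex : 0 < Real.exp x := Real.exp_pos x
  rw [he]
  rw [div_le_one (by positivity)]
  rw [div_le_iff₀ (by positivity)] at h
  calc (Real.exp x)⁻¹ * x ^ r ≤ (Real.exp x)⁻¹ * (Real.exp x * r.factorial) := by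
        apply mul_le_mul_of_nonneg_left h (by positivity)
    _ = r.factorial := by field_simp

lemma term_le_self {r : ℕ} (hr : 1 ≤ r) {x : ℝ} (hx : 0 ≤ x) :
    Real.exp (-x) * x ^ r / r.factorial ≤ x := by
  obtain ⟨m, rfl⟩ : ∃ m, r = m + 1 := ⟨r - 1, by omega⟩
  have h1 : Real.exp (-x) * x ^ m / m.factorial ≤ 1 := term_le_one m hx
  have hfac : (m.factorial : ℝ) ≤ (m + 1).factorial := by
    exact_mod_cast Nat.factorial_le (Nat.le_succ m)
  have hfp : (0:ℝ) < m.factorial := by positivity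
  have key : Real.exp (-x) * x ^ m ≤ m.factorial := by
    rw [div_le_one hfp] at h1; exact h1
  have hmain : Real.exp (-x) * x ^ (m+1) ≤ (m+1).factorial * x := by
    rw [pow_succ, ← mul_assoc]
    calc Real.exp (-x) * x ^ m * x ≤ (m.factorial : ℝ) * x :=
          mul_le_mul_of_nonneg_right key hx
      _ ≤ ((m+1).factorial : ℝ) * x := mul_le_mul_of_nonneg_right hfac hx
  rw [div_le_iff₀ (by positivity)]
  calc Real.exp (-x) * x ^ (m+1) ≤ (m+1).factorial * x := hmain
    _ = x * (m+1).factorial := by ring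

lemma term_le_inv (r : ℕ) {x : ℝ} (hx : 0 < x) :
    Real.exp (-x) * x ^ r / r.factorial ≤ (r + 1) / x := by
  have h := pow_div_fact_le_exp x hx.le (r + 1)
  rw [div_le_iff₀ (by positivity)] at h
  have he : Real.exp (-x) = (Real.exp x)⁻¹ := Real.exp_neg x
  have hex : 0 < Real.exp x := Real.exp_pos x
  rw [div_le_div_iff₀ (by positivity) hx, he]
  have hkey : x ^ (r+1) ≤ Real.exp x * ((r+1) * r.factorial) := by
    calc x ^ (r+1) ≤ Real.exp x * (r+1).factorial := h
      _ = Real.exp x * ((r+1) * r.factorial) := by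
          rw [Nat.factorial_succ]; push_cast; ring
  calc (Real.exp x)⁻¹ * x ^ r * x = (Real.exp x)⁻¹ * x ^ (r+1) := by rw [pow_succ]; ring
    _ ≤ (Real.exp x)⁻¹ * (Real.exp x * ((r+1) * r.factorial)) := by
        apply mul_le_mul_of_nonneg_left hkey (by positivity)
    _ = (r+1) * r.factorial := by field_simp
    _ = (↑r + 1) * ↑r.factorial := by norm_num

lemma term_le_min {r : ℕ} (hr : 1 ≤ r) {x : ℝ} (hx : 0 < x) :
    Real.exp (-x) * x ^ r / r.factorial ≤ (r + 1) * min x (1 / x) := by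
  rcases le_total x 1 with h | h
  · calc Real.exp (-x) * x ^ r / r.factorial ≤ x := term_le_self hr hx.le
      _ ≤ (r+1) * x := by nlinarith [hx.le, (by exact_mod_cast hr : (1:ℝ) ≤ r)]
      _ = (r+1) * min x (1/x) := by
          rw [min_eq_left]; rw [le_div_iff₀ hx]; nlinarith
  · calc Real.exp (-x) * x ^ r / r.factorial ≤ (r+1)/x := term_le_inv r hx
      _ = (r+1) * (1/x) := by ring
      _ = (r+1) * min x (1/x) := by
          rw [min_eq_right]; rw [div_le_iff₀ hx]; nlinarith

lemma geom_step {b : ℕ → ℝ} (hq : ∀ k, b (k+1) ≤ 3/4 * b k) (hb : ∀ k, 0 < b k) :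
    ∀ k l, b (k + l) ≤ (3/4) ^ l * b k := by
  intro k l
  induction l with
  | zero => simp
  | succ m ih =>
      have heq : b (k + (m+1)) = b ((k + m) + 1) := by ring_nf
      rw [heq]
      calc b ((k+m)+1) ≤ 3/4 * b (k+m) := hq _
        _ ≤ 3/4 * ((3/4)^m * b k) := by nlinarith [hb (k+m)]
        _ = (3/4)^(m+1) * b k := by ring

lemma geom_sum_le_four (n : ℕ) : ∑ k ∈ range n, (3/4 : ℝ) ^ k ≤ 4 := by
  have hs : Summable (fun k : ℕ => (3/4 : ℝ) ^ k) :=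
    summable_geometric_of_lt_one (by norm_num) (by norm_num)
  calc ∑ k ∈ range n, (3/4 : ℝ) ^ k ≤ ∑' k : ℕ, (3/4 : ℝ) ^ k :=
        Summable.sum_le_tsum _ (fun i _ => by positivity) hs
    _ = (1 - 3/4)⁻¹ := tsum_geometric_of_lt_one (by norm_num) (by norm_num)
    _ = 4 := by norm_num

lemma geom_aux {b : ℕ → ℝ} (hb : ∀ k, 0 < b k) (hq : ∀ k, b (k+1) ≤ 3/4 * b k) (n : ℕ) :
    ∑ k ∈ range n, min (b k) (1 / b k) ≤ 8 := by
  classical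
  have hex : ∃ k, b k ≤ 1 := by
    obtain ⟨m, hm⟩ := exists_pow_lt_of_lt_one (one_div_pos.mpr (hb 0)) (by norm_num : (3/4:ℝ) < 1)
    refine ⟨m, ?_⟩
    have h1 := geom_step hq hb 0 m
    simp only [Nat.zero_add] at h1
    have h2 : (3/4:ℝ)^m * b 0 < (1 / b 0) * b 0 := by
      apply mul_lt_mul_of_pos_right hm (hb 0)
    rw [one_div_mul_cancel (hb 0).ne'] at h2
    linarith
  set k₀ := Nat.find hex with hk₀
  have hk₀le : b k₀ ≤ 1 := Nat.find_spec hex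
  have hlt : ∀ k < k₀, 1 < b k := fun k hk => lt_of_not_ge (Nat.find_min hex hk)
  have hterm : ∀ k, min (b k) (1 / b k) ≤
      if k < k₀ then (3/4 : ℝ) ^ (k₀ - 1 - k) else (3/4 : ℝ) ^ (k - k₀) := by
    intro k
    by_cases hk : k < k₀
    · rw [if_pos hk]
      have h1 : 1 < b k := hlt k hk
      have hk1 : k₀ - 1 < k₀ := by omega
      have h2 : 1 < b (k₀ - 1) := hlt _ hk1
      have h3 : b (k₀ - 1) ≤ (3/4)^(k₀ - 1 - k) * b k := by
        have h5 := geom_step hq hb k (k₀ - 1 - k)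
        rwa [show k + (k₀ - 1 - k) = k₀ - 1 by omega] at h5
      have h4 : 1 / b k ≤ (3/4 : ℝ)^(k₀ - 1 - k) := by
        rw [div_le_iff₀ (hb k)]
        nlinarith
      exact le_trans (min_le_right _ _) h4
    · rw [if_neg hk]
      push_neg at hk
      have h3 : b k ≤ (3/4)^(k - k₀) * b k₀ := by
        have h5 := geom_step hq hb k₀ (k - k₀)
        rwa [show k₀ + (k - k₀) = k by omega] at h5
      have h4 : b k ≤ (3/4 : ℝ)^(k - k₀) := by
        nlinarith [pow_pos (by norm_num : (0:ℝ) < 3/4) (k - k₀)]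
      exact le_trans (min_le_left _ _) h4
  calc ∑ k ∈ range n, min (b k) (1 / b k)
      ≤ ∑ k ∈ range n, (if k < k₀ then (3/4 : ℝ) ^ (k₀ - 1 - k) else (3/4 : ℝ) ^ (k - k₀)) :=
        Finset.sum_le_sum (fun k _ => hterm k)
    _ = (∑ k ∈ (range n).filter (· < k₀), (3/4 : ℝ) ^ (k₀ - 1 - k))
        + (∑ k ∈ (range n).filter (fun k => ¬ k < k₀), (3/4 : ℝ) ^ (k - k₀)) :=
        Finset.sum_ite _ _
    _ ≤ 4 + 4 := by
        gcongr
        · calc ∑ k ∈ (range n).filter (· < k₀), (3/4 : ℝ) ^ (k₀ - 1 - k)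
              ≤ ∑ k ∈ range k₀, (3/4 : ℝ) ^ (k₀ - 1 - k) := by
                apply Finset.sum_le_sum_of_subset_of_nonneg
                · intro k hk
                  simp only [Finset.mem_filter, Finset.mem_range] at hk ⊢
                  exact hk.2
                · intro i _ _; positivity
            _ = ∑ k ∈ range k₀, (3/4 : ℝ) ^ k := Finset.sum_range_reflect _ _
            _ ≤ 4 := geom_sum_le_four _
        · calc ∑ k ∈ (range n).filter (fun k => ¬ k < k₀), (3/4 : ℝ) ^ (k - k₀)
              = ∑ k ∈ Finset.Ico k₀ n, (3/4 : ℝ) ^ (k - k₀) := by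
                apply Finset.sum_congr _ (fun _ _ => rfl)
                ext k
                simp only [Finset.mem_filter, Finset.mem_range, Finset.mem_Ico, not_lt]
                tauto
            _ = ∑ k ∈ range (n - k₀), (3/4 : ℝ) ^ (k₀ + k - k₀) :=
                Finset.sum_Ico_eq_sum_range (fun k => (3/4 : ℝ) ^ (k - k₀)) k₀ n
            _ = ∑ k ∈ range (n - k₀), (3/4 : ℝ) ^ k := by
                apply Finset.sum_congr rfl
                intro k _
                congr 1
                omega
            _ ≤ 4 := geom_sum_le_four _
    _ = 8 := by norm_num

end Aux

section Main

lemma suff_bound (p : ℕ → ℝ) (hp : ∀ j, 0 < p j) (h J : ℕ) (hh : 1 ≤ h)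
    (hJ : ∀ j, J ≤ j → p (j + h) ≤ 3/4 * p j) (r : ℕ) (hr : 1 ≤ r)
    (t : ℝ) (ht : 0 < t) :
    Phi p r t ≤ J + (r + 1) * (8 * h) := by
  classical
  unfold Phi
  have hC : (0:ℝ) ≤ (J:ℝ) + ((r:ℝ) + 1) * (8 * (h:ℝ)) := by positivity
  apply tsum_le_of_sum_le' hC
  intro s
  obtain ⟨n, hn⟩ := s.exists_nat_subset_range
  have hnonneg : ∀ j : ℕ, 0 ≤ Real.exp (-(t * p j)) * (t * p j) ^ r / r.factorial :=
    fun j => div_nonneg (mul_nonneg (Real.exp_nonneg _)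
      (pow_nonneg (mul_pos ht (hp j)).le _)) (by positivity)
  calc ∑ j ∈ s, Real.exp (-(t * p j)) * (t * p j) ^ r / r.factorial
      ≤ ∑ j ∈ range n, Real.exp (-(t * p j)) * (t * p j) ^ r / r.factorial :=
        Finset.sum_le_sum_of_subset_of_nonneg hn (fun j _ _ => hnonneg j)
    _ ≤ ∑ j ∈ range n, (if j < J then (1:ℝ)
          else (r + 1) * min (t * p j) (1 / (t * p j))) := by
        apply Finset.sum_le_sum
        intro j _
        by_cases hj : j < J
        · rw [if_pos hj]; exact term_le_one r (mul_pos ht (hp j)).le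
        · rw [if_neg hj]; exact term_le_min hr (mul_pos ht (hp j))
    _ = (∑ j ∈ (range n).filter (· < J), (1:ℝ))
        + (∑ j ∈ (range n).filter (fun j => ¬ j < J),
            (r + 1) * min (t * p j) (1 / (t * p j))) := Finset.sum_ite _ _
    _ ≤ J + (r + 1) * (8 * h) := by
        gcongr ?_ + ?_
        · rw [Finset.sum_const, nsmul_eq_mul, mul_one]
          have hsub : (range n).filter (· < J) ⊆ range J := by
            intro k hk
            simp only [Finset.mem_filter, Finset.mem_range] at hk ⊢
            exact hk.2
          calc ((Finset.filter (· < J) (range n)).card : ℝ)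
              ≤ ((range J).card : ℝ) := by exact_mod_cast Finset.card_le_card hsub
            _ = J := by simp
        · have key : ∑ j ∈ (range n).filter (fun j => ¬ j < J),
              min (t * p j) (1 / (t * p j)) ≤ 8 * h := by
            set ψ : ℕ × ℕ → ℕ := fun q => J + q.1 + q.2 * h with hψ
            have hsub : (range n).filter (fun j => ¬ j < J) ⊆
                (range h ×ˢ range n).image ψ := by
              intro j hj
              simp only [Finset.mem_filter, Finset.mem_range, not_lt] at hj
              obtain ⟨hjn, hJj⟩ := hj
              rw [Finset.mem_image]
              refine ⟨((j - J) % h, (j - J) / h), ?_, ?_⟩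
              · rw [Finset.mem_product]
                constructor
                · exact Finset.mem_range.mpr (Nat.mod_lt _ (by omega))
                · refine Finset.mem_range.mpr ?_
                  have := Nat.div_le_self (j - J) h
                  omega
              · simp only [hψ]
                have h1 := Nat.mod_add_div (j - J) h
                have h2 : (j - J) / h * h = h * ((j - J) / h) := Nat.mul_comm _ _
                omega
            have hinj : ∀ x ∈ range h ×ˢ range n, ∀ y ∈ range h ×ˢ range n,
                ψ x = ψ y → x = y := by
              rintro ⟨i, k⟩ hx ⟨i', k'⟩ hy hxy
              rw [Finset.mem_product, Finset.mem_range, Finset.mem_range] at hx hy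
              simp only [hψ] at hxy
              have hxy2 : i + k * h = i' + k' * h := by omega
              have hi : i = i' := by
                have h1 : (i + k * h) % h = (i' + k' * h) % h := by rw [hxy2]
                rw [Nat.add_mul_mod_self_right, Nat.add_mul_mod_self_right] at h1
                rwa [Nat.mod_eq_of_lt hx.1, Nat.mod_eq_of_lt hy.1] at h1
              subst hi
              have hkk : k * h = k' * h := by omega
              have hk : k = k' := Nat.eq_of_mul_eq_mul_right (by omega) hkk
              simp [hk]
            calc ∑ j ∈ (range n).filter (fun j => ¬ j < J), min (t * p j) (1 / (t * p j))
                ≤ ∑ j ∈ (range h ×ˢ range n).image ψ, min (t * p j) (1 / (t * p j)) := by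
                  apply Finset.sum_le_sum_of_subset_of_nonneg hsub
                  intro j _ _
                  have := hp j
                  positivity
              _ = ∑ q ∈ range h ×ˢ range n, min (t * p (ψ q)) (1 / (t * p (ψ q))) :=
                  Finset.sum_image hinj
              _ = ∑ i ∈ range h, ∑ k ∈ range n,
                    min (t * p (J + i + k * h)) (1 / (t * p (J + i + k * h))) := by
                  rw [Finset.sum_product]
              _ ≤ ∑ i ∈ range h, (8:ℝ) := by
                  apply Finset.sum_le_sum
                  intro i _
                  apply geom_aux
                  · intro k; have := hp (J + i + k * h); positivity
                  · intro k
                    have harith : J + i + (k + 1) * h = (J + i + k * h) + h := by ring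
                    rw [harith]
                    have := hJ (J + i + k * h) (by omega)
                    nlinarith [ht]
              _ = 8 * h := by
                  rw [Finset.sum_const, nsmul_eq_mul]
                  simp [mul_comm]
          calc ∑ j ∈ (range n).filter (fun j => ¬ j < J),
                (↑r + 1) * min (t * p j) (1 / (t * p j))
              = (↑r + 1) * ∑ j ∈ (range n).filter (fun j => ¬ j < J),
                  min (t * p j) (1 / (t * p j)) := by rw [Finset.mul_sum]
            _ ≤ (↑r + 1) * (8 * h) := by
                apply mul_le_mul_of_nonneg_left key
                positivity

lemma summable_term (p : ℕ → ℝ) (hp : ∀ j, 0 < p j) (hps : Summable p)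
    {r : ℕ} (hr : 1 ≤ r) {t : ℝ} (ht : 0 < t) :
    Summable (fun j => Real.exp (-(t * p j)) * (t * p j) ^ r / r.factorial) := by
  apply Summable.of_nonneg_of_le
  · intro j
    exact div_nonneg (mul_nonneg (Real.exp_nonneg _)
      (pow_nonneg (mul_pos ht (hp j)).le _)) (by positivity)
  · intro j
    exact term_le_self hr (mul_pos ht (hp j)).le
  · exact hps.mul_left t

lemma necc (p : ℕ → ℝ) (hp : ∀ j, 0 < p j) (hdec : ∀ j, p (j + 1) ≤ p j)
    (hps : Summable p) (r : ℕ) (hr : 1 ≤ r) (C T : ℝ)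
    (hT : ∀ t : ℝ, T ≤ t → Phi p r t ≤ C) :
    ∃ h : ℕ, 1 ≤ h ∧ ∀ᶠ j in atTop, p (j + h) ≤ p j / 4 := by
  have hanti : Antitone p := antitone_nat_of_succ_le hdec
  have hrpos : (0:ℝ) < r := by exact_mod_cast hr
  set c : ℝ := Real.exp (-(r:ℝ)) * ((r:ℝ)/4) ^ r / r.factorial with hc
  have hr4 : (0:ℝ) < (r:ℝ)/4 := by linarith
  have hcpos : 0 < c := by rw [hc]; positivity
  set N : ℕ := ⌈C / c⌉₊ with hN
  refine ⟨N + 1, by omega, ?_⟩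
  set M : ℝ := max T 1 with hM
  have hMpos : 0 < M := lt_of_lt_of_le one_pos (le_max_right _ _)
  have hp0 : Tendsto p atTop (nhds 0) := hps.tendsto_atTop_zero
  have hev : ∀ᶠ j in atTop, p j < r / M := by
    have hrM : (0:ℝ) < r / M := by positivity
    exact hp0.eventually (gt_mem_nhds hrM)
  filter_upwards [hev] with j hj
  by_contra hcon
  push_neg at hcon
  set t : ℝ := r / p j with htdef
  have hpj := hp j
  have htpos : 0 < t := by positivity
  have htT : T ≤ t := by
    have h1 : p j * M < r := by
      rw [← lt_div_iff₀ hMpos]; exact hj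
    have h2 : M < t := by
      rw [htdef, lt_div_iff₀ hpj]; nlinarith
    exact le_trans (le_max_left _ _) h2.le
  have htpj : t * p j = r := by
    rw [htdef]; field_simp
  have hblock : ∀ i ∈ Finset.Icc j (j + (N + 1)),
      c ≤ Real.exp (-(t * p i)) * (t * p i) ^ r / r.factorial := by
    intro i hi
    rw [Finset.mem_Icc] at hi
    have hup : p i ≤ p j := hanti hi.1
    have hlow : p (j + (N + 1)) ≤ p i := hanti hi.2
    have h1 : t * p i ≤ r := by
      calc t * p i ≤ t * p j := by nlinarith
        _ = r := htpj
    have h2 : (r:ℝ)/4 ≤ t * p i := by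
      have hcon' : p j / 4 < p (j + (N+1)) := hcon
      have h3 : t * (p j / 4) ≤ t * p i := by nlinarith
      calc (r:ℝ)/4 = t * p j / 4 := by rw [htpj]
        _ = t * (p j / 4) := by ring
        _ ≤ t * p i := h3
    rw [hc]
    gcongr
  have hsummable := summable_term p hp hps hr htpos
  have hsum_le : ∑ i ∈ Finset.Icc j (j + (N + 1)),
      Real.exp (-(t * p i)) * (t * p i) ^ r / r.factorial ≤ Phi p r t := by
    unfold Phi
    apply Summable.sum_le_tsum
    · intro i _
      exact div_nonneg (mul_nonneg (Real.exp_nonneg _)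
        (pow_nonneg (mul_pos htpos (hp i)).le _)) (by positivity)
    · exact hsummable
  have hcard : (Finset.Icc j (j + (N + 1))).card = N + 2 := by
    rw [Nat.card_Icc]; omega
  have hlower : ((N:ℝ) + 2) * c ≤ Phi p r t := by
    calc ((N:ℝ) + 2) * c = ∑ _i ∈ Finset.Icc j (j + (N + 1)), c := by
          rw [Finset.sum_const, hcard, nsmul_eq_mul]; push_cast; ring
      _ ≤ ∑ i ∈ Finset.Icc j (j + (N + 1)),
            Real.exp (-(t * p i)) * (t * p i) ^ r / r.factorial :=
          Finset.sum_le_sum hblock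
      _ ≤ Phi p r t := hsum_le
  have hupper : Phi p r t ≤ C := hT t htT
  have hNge : C / c ≤ (N:ℝ) := Nat.le_ceil _
  have hfin : C < ((N:ℝ) + 2) * c := by
    have hNc : C ≤ (N:ℝ) * c := by
      rw [div_le_iff₀ hcpos] at hNge; linarith
    nlinarith
  linarith

end Main

theorem stmt_18 (p : ℕ → ℝ) (hp : ∀ j, 0 < p j) (hdec : ∀ j, p (j + 1) ≤ p j)
    (hsum : ∑' j : ℕ, p j = 1) :
    ((∃ r : ℕ, 1 ≤ r ∧ ∃ C : ℝ, ∀ᶠ t : ℝ in Filter.atTop, Phi p r t ≤ C) ↔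
      ∃ h : ℕ, 1 ≤ h ∧
        Filter.limsup (fun j : ℕ => p (j + h) / p j) Filter.atTop ≤ 1 / 2) ∧
    ((∀ r : ℕ, 1 ≤ r → ∃ C : ℝ, ∀ᶠ t : ℝ in Filter.atTop, Phi p r t ≤ C) ↔
      ∃ h : ℕ, 1 ≤ h ∧
        Filter.limsup (fun j : ℕ => p (j + h) / p j) Filter.atTop ≤ 1 / 2) := by
  have hps : Summable p := by
    by_contra hns
    rw [tsum_eq_zero_of_not_summable hns] at hsum
    norm_num at hsum
  have hanti : Antitone p := antitone_nat_of_succ_le hdec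
  -- (A) → (C)
  have hAC : (∃ r : ℕ, 1 ≤ r ∧ ∃ C : ℝ, ∀ᶠ t : ℝ in Filter.atTop, Phi p r t ≤ C) →
      ∃ h : ℕ, 1 ≤ h ∧
        Filter.limsup (fun j : ℕ => p (j + h) / p j) Filter.atTop ≤ 1 / 2 := by
    rintro ⟨r, hr, C, hC⟩
    rw [Filter.eventually_atTop] at hC
    obtain ⟨T, hT⟩ := hC
    obtain ⟨h, hh, hev⟩ := necc p hp hdec hps r hr C T hT
    refine ⟨h, hh, ?_⟩
    apply Filter.limsup_le_of_le
    · apply Filter.isCoboundedUnder_le_of_le Filter.atTop (x := 0)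
      intro j
      exact div_nonneg (hp (j + h)).le (hp j).le
    · filter_upwards [hev] with j hj
      have hpj := hp j
      rw [div_le_iff₀ hpj]
      nlinarith
  -- (C) → (B)
  have hCB : (∃ h : ℕ, 1 ≤ h ∧
        Filter.limsup (fun j : ℕ => p (j + h) / p j) Filter.atTop ≤ 1 / 2) →
      ∀ r : ℕ, 1 ≤ r → ∃ C : ℝ, ∀ᶠ t : ℝ in Filter.atTop, Phi p r t ≤ C := by
    rintro ⟨h, hh, hlim⟩ r hr
    have hbdd : Filter.IsBoundedUnder (· ≤ ·) Filter.atTop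
        (fun j : ℕ => p (j + h) / p j) := by
      refine ⟨1, Filter.eventually_map.mpr ?_⟩
      apply Filter.Eventually.of_forall
      intro j
      show p (j + h) / p j ≤ 1
      rw [div_le_one (hp j)]
      exact hanti (Nat.le_add_right j h)
    have hev : ∀ᶠ j in Filter.atTop, p (j + h) / p j < 3/4 :=
      Filter.eventually_lt_of_limsup_lt (lt_of_le_of_lt hlim (by norm_num)) hbdd
    rw [Filter.eventually_atTop] at hev
    obtain ⟨J, hJ⟩ := hev
    refine ⟨J + (r + 1) * (8 * h), ?_⟩
    rw [Filter.eventually_atTop]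
    refine ⟨1, fun t ht => ?_⟩
    apply suff_bound p hp h J hh ?_ r hr t (by linarith)
    intro j hj
    have := hJ j hj
    rw [div_lt_iff₀ (hp j)] at this
    nlinarith
  constructor
  · exact ⟨hAC, fun hc => ⟨1, le_refl 1, hCB hc 1 (le_refl 1)⟩⟩
  · exact ⟨fun hB => hAC ⟨1, le_refl 1, hB 1 (le_refl 1)⟩, hCB⟩
end
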